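/- arXiv:0808.0277 — 2 statements merged into one kernel-verified Lean document; each statement's English description precedes it below -/
import Mathlib

section
/- Let G be a free group with basis g₁, …, g_n with n > 1. For every ε > 0 there exists M > 0 such that for every m ≥ M, among all endomorphisms φ : G → G determined by n-tuples (φ(g₁), …, φ(g_n)) of elements of G of reduced word length at most m, the proportion of those φ which have remnant is greater than 1 − ε. -/
/-! Basic definitions: cancellation in products of reduced words, remnant
of a homomorphism of free groups, and assorted constructions. -/

open FreeGroup

/-- `bpow w e` is `w` if `e = true` (exponent `+1`) and `w⁻¹` if `e = false`
(exponent `-1`). -/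
def bpow {β : Type*} (w : FreeGroup β) (e : Bool) : FreeGroup β := if e then w else w⁻¹

/-- The number of letters cancelled between `a` and `b` when the product `a * b`
is brought to reduced form: `(|a| + |b| - |a * b|) / 2`. -/
def cancel {β : Type*} [DecidableEq β] (a b : FreeGroup β) : ℕ :=
  (FreeGroup.norm a + FreeGroup.norm b - FreeGroup.norm (a * b)) / 2

/-- The maximal number of letters of the reduced word `η(gᵢ)` cancelled on its left
in a product `η(gⱼ)^ε * η(gᵢ)`, over all `j` and `ε = ±1` except `j = i, ε = -1`. -/
def maxLeftCancel {α β : Type*} [Fintype α] [DecidableEq α] [DecidableEq β]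
    (η : FreeGroup α →* FreeGroup β) (i : α) : ℕ :=
  (Finset.univ.filter fun je : α × Bool => je ≠ (i, false)).sup
    fun je => cancel (bpow (η (FreeGroup.of je.1)) je.2) (η (FreeGroup.of i))

/-- The maximal number of letters of the reduced word `η(gᵢ)` cancelled on its right
in a product `η(gᵢ) * η(gⱼ)^ε`, over all `j` and `ε = ±1` except `j = i, ε = -1`. -/
def maxRightCancel {α β : Type*} [Fintype α] [DecidableEq α] [DecidableEq β]
    (η : FreeGroup α →* FreeGroup β) (i : α) : ℕ :=
  (Finset.univ.filter fun je : α × Bool => je ≠ (i, false)).sup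
    fun je => cancel (η (FreeGroup.of i)) (bpow (η (FreeGroup.of je.1)) je.2)

/-- `η` has remnant: for each generator `gᵢ`, the maximal left cancellation plus the
maximal right cancellation is strictly less than the length of `η(gᵢ)`, so a nonempty
middle subword (the remnant `Rem_η(gᵢ)`) always survives. -/
def HasRemnant {α β : Type*} [Fintype α] [DecidableEq α] [DecidableEq β]
    (η : FreeGroup α →* FreeGroup β) : Prop :=
  ∀ i : α, maxLeftCancel η i + maxRightCancel η i < FreeGroup.norm (η (FreeGroup.of i))

/-- The length `|Rem_η(gᵢ)|` of the remnant word of `gᵢ`: the part of `η(gᵢ)` surviving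
all maximal cancellations. -/
def remnantLength {α β : Type*} [Fintype α] [DecidableEq α] [DecidableEq β]
    (η : FreeGroup α →* FreeGroup β) (i : α) : ℕ :=
  FreeGroup.norm (η (FreeGroup.of i)) - maxLeftCancel η i - maxRightCancel η i

/-- The remnant `Rem_η(gᵢ)` occupies positions `[maxLeftCancel η i, |η(gᵢ)| - maxRightCancel η i)`
of the reduced word `η(gᵢ)`.  It does not fully cancel in the reduced form of the product
`η(gᵢ) * w` iff the number of letters cancelled from the right end of `η(gᵢ)`, namely
`cancel (η(gᵢ)) w`, leaves some remnant letter alive. -/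
def remnantSurvivesRightMul {α β : Type*} [Fintype α] [DecidableEq α] [DecidableEq β]
    (η : FreeGroup α →* FreeGroup β) (i : α) (w : FreeGroup β) : Prop :=
  cancel (η (FreeGroup.of i)) w + maxLeftCancel η i < FreeGroup.norm (η (FreeGroup.of i))

/-- The remnant `Rem_η(gᵢ)` does not fully cancel in the reduced form of the
product `w * η(gᵢ)`. -/
def remnantSurvivesLeftMul {α β : Type*} [Fintype α] [DecidableEq α] [DecidableEq β]
    (η : FreeGroup α →* FreeGroup β) (i : α) (w : FreeGroup β) : Prop :=
  cancel w (η (FreeGroup.of i)) + maxRightCancel η i < FreeGroup.norm (η (FreeGroup.of i))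

/-- The homomorphism `φ ∗ ψ : G ∗ G → H` on the free product `G ∗ G`, realized as the
free group on `α ⊕ α`, sending the generators of the first factor via `φ` and those of
the second factor via `ψ`. -/
def prodHom {α β : Type*} (φ ψ : FreeGroup α →* FreeGroup β) :
    FreeGroup (α ⊕ α) →* FreeGroup β :=
  FreeGroup.lift (Sum.elim (fun i => φ (FreeGroup.of i)) (fun i => ψ (FreeGroup.of i)))

/-- `φ^v : g ↦ v⁻¹ φ(g) v`. -/
def conjHom {G H : Type*} [Group G] [Group H] (φ : G →* H) (v : H) : G →* H :=
  ((MulAut.conj v⁻¹).toMonoidHom).comp φ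

/-- The equalizer subgroup `Eq(φ, ψ) = {g : φ g = ψ g}`. -/
def eqSubgroup {G H : Type*} [Group G] [Group H] (φ ψ : G →* H) : Subgroup G where
  carrier := {g | φ g = ψ g}
  one_mem' := by simp
  mul_mem' := by
    intro a b ha hb
    simp only [Set.mem_setOf_eq] at *
    rw [_root_.map_mul, _root_.map_mul, ha, hb]
  inv_mem' := by
    intro a ha
    simp only [Set.mem_setOf_eq] at *
    rw [_root_.map_inv, _root_.map_inv, ha]

namespace RemnantProof

variable {α : Type*} [DecidableEq α]

/-- A word is reduced. -/
def RD (w : List (α × Bool)) : Prop :=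
  List.Chain' (fun a b => ¬(a.1 = b.1 ∧ a.2 = !b.2)) w

lemma rd_nil : RD ([] : List (α × Bool)) := List.isChain_nil

lemma reduce_eq_self : ∀ {w : List (α × Bool)}, RD w → FreeGroup.reduce w = w := by
  intro w
  induction w with
  | nil => intro _; rfl
  | cons x t ih =>
    intro h
    rw [FreeGroup.reduce.cons, ih (List.IsChain.tail h)]
    cases t with
    | nil => rfl
    | cons y t' =>
      have hxy : ¬(x.1 = y.1 ∧ x.2 = !y.2) := (List.isChain_cons_cons.mp h).1
      simp [hxy]

lemma rd_of_no_pair : ∀ (l : List (α × Bool)),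
    (∀ (L₂ L₃ : List (α × Bool)) (x : α) (b : Bool), l ≠ L₂ ++ (x, b) :: (x, !b) :: L₃) →
    RD l := by
  intro l
  induction l with
  | nil => intro _; exact rd_nil
  | cons a t ih =>
    intro h
    cases t with
    | nil => exact List.isChain_singleton a
    | cons a' t' =>
      rw [RD, List.Chain', List.isChain_cons_cons]
      constructor
      · rintro ⟨h1, h2⟩
        exact h [] t' a.1 a.2 (by cases a; cases a'; simp_all)
      · exact ih fun L₂ L₃ x b hh => h (a :: L₂) L₃ x b (by rw [hh]; rfl)

lemma rd_toWord (g : FreeGroup α) : RD g.toWord := by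
  apply rd_of_no_pair
  intro L₂ L₃ x b hh
  exact FreeGroup.reduce.not (L₁ := g.toWord) (by rw [FreeGroup.reduce_toWord g, hh])

lemma rd_append_left {u v : List (α × Bool)} (h : RD (u ++ v)) : RD u :=
  (List.isChain_append.mp h).1

lemma rd_append_right {u v : List (α × Bool)} (h : RD (u ++ v)) : RD v :=
  (List.isChain_append.mp h).2.1

/-- Structural decomposition of the cancellation in a product of reduced words. -/
lemma exists_decomp_list : ∀ (v u : List (α × Bool)), RD u → RD v →
    ∃ w u' v', u = u' ++ w ∧ v = FreeGroup.invRev w ++ v' ∧ RD (u' ++ v') ∧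
      FreeGroup.reduce (u ++ v) = u' ++ v' := by
  intro v
  induction v with
  | nil =>
    intro u hu _
    exact ⟨[], u, [], by simp, by simp [FreeGroup.invRev], by simpa using hu,
      by simpa using reduce_eq_self hu⟩
  | cons y v₁ ih =>
    intro u hu hv
    rcases List.eq_nil_or_concat u with rfl | ⟨u₀, x, rfl⟩
    · exact ⟨[], [], y :: v₁, by simp, by simp [FreeGroup.invRev], by simpa using hv,
        by simpa using reduce_eq_self hv⟩
    · simp only [List.concat_eq_append] at hu ⊢
      by_cases hxy : y = (x.1, !x.2)
      · obtain ⟨w, u', v', h1, h2, h3, h4⟩ :=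
          ih u₀ (rd_append_left hu) (List.IsChain.tail hv)
        refine ⟨w ++ [x], u', v', ?_, ?_, h3, ?_⟩
        · rw [h1, List.append_assoc]
        · subst hxy
          rw [h2]
          simp [FreeGroup.invRev]
        · have hstep : FreeGroup.Red.Step (u₀ ++ [x] ++ y :: v₁) (u₀ ++ v₁) := by
            subst hxy
            have : u₀ ++ [x] ++ (x.1, !x.2) :: v₁ = u₀ ++ (x.1, x.2) :: (x.1, !x.2) :: v₁ := by
              simp
            rw [this]
            exact FreeGroup.Red.Step.not
          rw [FreeGroup.reduce.Step.eq hstep, h4]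
      · have hj : RD ((u₀ ++ [x]) ++ y :: v₁) := by
          rw [RD, List.Chain', List.isChain_append]
          refine ⟨hu, hv, ?_⟩
          intro p hp q hq
          simp at hp hq
          subst hp; subst hq
          rintro ⟨h1, h2⟩
          exact hxy (by cases x; cases y; simp_all)
        exact ⟨[], u₀ ++ [x], y :: v₁, by simp, by simp [FreeGroup.invRev], hj,
          by simpa using reduce_eq_self hj⟩


lemma norm_eq_length (a : FreeGroup α) : FreeGroup.norm a = a.toWord.length := rfl

/-- FreeGroup-level decomposition: the cancelled part `w`. -/
lemma decomp (a b : FreeGroup α) :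
    ∃ (w u' v' : List (α × Bool)), a.toWord = u' ++ w ∧ b.toWord = FreeGroup.invRev w ++ v' ∧
      (a * b).toWord = u' ++ v' ∧ cancel a b = w.length := by
  obtain ⟨w, u', v', h1, h2, h3, h4⟩ :=
    exists_decomp_list b.toWord a.toWord (rd_toWord a) (rd_toWord b)
  refine ⟨w, u', v', h1, h2, ?_, ?_⟩
  · have : a * b = FreeGroup.mk (a.toWord ++ b.toWord) := by
      rw [← FreeGroup.mul_mk, FreeGroup.mk_toWord, FreeGroup.mk_toWord]
    rw [this, FreeGroup.toWord_mk, h4]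
  · have hna : FreeGroup.norm a = u'.length + w.length := by
      rw [norm_eq_length, h1, List.length_append]
    have hnb : FreeGroup.norm b = w.length + v'.length := by
      rw [norm_eq_length, h2, List.length_append, FreeGroup.invRev_length]
    have hnab : FreeGroup.norm (a * b) = u'.length + v'.length := by
      have : a * b = FreeGroup.mk (a.toWord ++ b.toWord) := by
        rw [← FreeGroup.mul_mk, FreeGroup.mk_toWord, FreeGroup.mk_toWord]
      rw [norm_eq_length, this, FreeGroup.toWord_mk, h4, List.length_append]
    rw [cancel, hna, hnb, hnab]
    omega

lemma cancel_le_right (a b : FreeGroup α) : cancel a b ≤ FreeGroup.norm b := by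
  obtain ⟨w, u', v', _, h2, _, h4⟩ := decomp a b
  rw [h4, norm_eq_length, h2, List.length_append, FreeGroup.invRev_length]
  omega

/-- The start of `b` is determined by the end of `a` and the amount of cancellation. -/
lemma toWord_eq_left (a b : FreeGroup α) :
    b.toWord = FreeGroup.invRev (a.toWord.drop (a.toWord.length - cancel a b)) ++
      b.toWord.drop (cancel a b) := by
  obtain ⟨w, u', v', h1, h2, _, h4⟩ := decomp a b
  have hdropa : a.toWord.drop (a.toWord.length - cancel a b) = w := by
    rw [h1, h4, List.length_append]
    have : u'.length + w.length - w.length = u'.length := by omega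
    rw [this, List.drop_left]
  have hdropb : b.toWord.drop (cancel a b) = v' := by
    rw [h2, h4, ← FreeGroup.invRev_length (L₁ := w), List.drop_left]
  rw [hdropa, hdropb, ← h2]

/-- The end of `b` is determined by the start of `a` and the amount of cancellation. -/
lemma toWord_eq_right (a b : FreeGroup α) :
    b.toWord = b.toWord.take (b.toWord.length - cancel b a) ++
      FreeGroup.invRev (a.toWord.take (cancel b a)) := by
  obtain ⟨w, u', v', h1, h2, _, h4⟩ := decomp b a
  have htakea : a.toWord.take (cancel b a) = FreeGroup.invRev w := by
    rw [h2, h4, ← FreeGroup.invRev_length (L₁ := w), List.take_left]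
  have htakeb : b.toWord.take (b.toWord.length - cancel b a) = u' := by
    rw [h1, h4, List.length_append]
    have : u'.length + w.length - w.length = u'.length := by omega
    rw [this, List.take_left]
  rw [htakea, htakeb, FreeGroup.invRev_invRev, ← h1]

lemma self_cancel (b : FreeGroup α) (hb : b ≠ 1) : 2 * cancel b b < FreeGroup.norm b := by
  by_contra hcon
  push_neg at hcon
  set u := b.toWord with hu
  set ℓ := u.length with hl
  set c := cancel b b with hcc
  have hn : FreeGroup.norm b = ℓ := rfl
  have hc : ℓ ≤ 2 * c := by omega
  have hcl : c ≤ ℓ := by have := cancel_le_right b b; omega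
  have hl1 : 1 ≤ ℓ := by
    rcases Nat.eq_zero_or_pos ℓ with h | h
    · exact absurd (FreeGroup.norm_eq_zero.mp (hn.trans h)) hb
    · exact h
  have hkey : ∀ k j, k < c → j = ℓ - 1 - k →
      u[k]? = u[j]?.map (fun p => (p.1, !p.2)) := by
    intro k j hkc hj
    subst hj
    have heq := toWord_eq_left b b
    rw [← hu, ← hcc, ← hl] at heq
    have hlen : (List.map (fun g : α × Bool => (g.1, !g.2)) (u.drop (ℓ - c))).length = c := by
      simp only [List.length_map, List.length_drop]
      omega
    have hklen : k < (FreeGroup.invRev (u.drop (ℓ - c))).length := by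
      rw [FreeGroup.invRev_length, List.length_drop]; omega
    calc u[k]? = (FreeGroup.invRev (u.drop (ℓ - c)) ++ u.drop c)[k]? := by
              conv_lhs => rw [heq]
      _ = (FreeGroup.invRev (u.drop (ℓ - c)))[k]? := List.getElem?_append_left hklen
      _ = (List.map (fun g : α × Bool => (g.1, !g.2)) (u.drop (ℓ - c)))[c - 1 - k]? := by
              rw [FreeGroup.invRev, List.getElem?_reverse (by rw [hlen]; exact hkc), hlen]
      _ = Option.map (fun g : α × Bool => (g.1, !g.2)) (u.drop (ℓ - c))[c - 1 - k]? := by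
              rw [List.getElem?_map]
      _ = Option.map (fun g : α × Bool => (g.1, !g.2)) u[(ℓ - c) + (c - 1 - k)]? := by
              rw [List.getElem?_drop]
      _ = u[ℓ - 1 - k]?.map (fun p => (p.1, !p.2)) := by
              have hidx : (ℓ - c) + (c - 1 - k) = ℓ - 1 - k := by omega
              rw [hidx]
  rcases Nat.even_or_odd ℓ with ⟨t, ht⟩ | ⟨t, ht⟩
  · -- ℓ = 2t, use k = t-1
    have ht1 : 1 ≤ t := by omega
    have hk := hkey (t - 1) t (by omega) (by omega)
    rw [List.getElem?_eq_getElem (show t - 1 < u.length by omega),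
        List.getElem?_eq_getElem (show t < u.length by omega)] at hk
    simp only [Option.map_some] at hk
    have hk' : u[t - 1]'(by omega) = ((u[t]'(by omega)).1, !(u[t]'(by omega)).2) :=
      Option.some.inj hk
    have hchain := rd_toWord b
    rw [← hu, RD, List.Chain', List.isChain_iff_getElem] at hchain
    have hch := hchain (t - 1) (by omega)
    apply hch
    have h1 : u[t - 1 + 1]'(by omega) = u[t]'(by omega) := by
      congr 1; omega
    rw [h1, hk']
    exact ⟨rfl, rfl⟩
  · -- ℓ = 2t+1, use k = t
    have hk := hkey t t (by omega) (by omega)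
    rw [List.getElem?_eq_getElem (show t < u.length by omega)] at hk
    simp only [Option.map_some] at hk
    have hk' : u[t]'(by omega) = ((u[t]'(by omega)).1, !(u[t]'(by omega)).2) :=
      Option.some.inj hk
    have := congrArg Prod.snd hk'
    simp at this

lemma cancel_le_left (a b : FreeGroup α) : cancel a b ≤ FreeGroup.norm a := by
  obtain ⟨w, u', v', h1, _, _, h4⟩ := decomp a b
  rw [h4, norm_eq_length, h1, List.length_append]
  omega

section Counting

variable [Fintype α]

/-- All lists of length at most `K`. -/
def AllW : ℕ → Finset (List (α × Bool))
  | 0 => {[]}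
  | K + 1 => insert [] ((Finset.univ ×ˢ AllW K).image fun p => p.1 :: p.2)

lemma mem_AllW : ∀ (K : ℕ) (l : List (α × Bool)), l.length ≤ K → l ∈ AllW K := by
  intro K
  induction K with
  | zero =>
    intro l hl
    rw [Nat.le_zero, List.length_eq_zero_iff] at hl
    simp [AllW, hl]
  | succ K ih =>
    intro l hl
    cases l with
    | nil => simp [AllW]
    | cons x t =>
      rw [AllW, Finset.mem_insert]
      right
      rw [Finset.mem_image]
      exact ⟨(x, t), Finset.mem_product.mpr ⟨Finset.mem_univ _,
        ih t (by simpa using hl)⟩, rfl⟩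

lemma card_AllW (hN : 1 ≤ Fintype.card α) :
    ∀ K : ℕ, (AllW (α := α) K).card ≤ (K + 1) * (2 * Fintype.card α) ^ K := by
  have h2N : Fintype.card (α × Bool) = 2 * Fintype.card α := by
    simp [Fintype.card_prod, mul_comm]
  intro K
  induction K with
  | zero => simp [AllW]
  | succ K ih =>
    rw [AllW]
    calc (insert [] ((Finset.univ ×ˢ AllW (α := α) K).image fun p => p.1 :: p.2)).card
        ≤ ((Finset.univ ×ˢ AllW (α := α) K).image fun p => p.1 :: p.2).card + 1 :=
          Finset.card_insert_le _ _
      _ ≤ (Finset.univ ×ˢ AllW (α := α) K).card + 1 :=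
          Nat.add_le_add_right (Finset.card_image_le) 1
      _ = 2 * Fintype.card α * (AllW (α := α) K).card + 1 := by
          rw [Finset.card_product, Finset.card_univ, h2N]
      _ ≤ 2 * Fintype.card α * ((K + 1) * (2 * Fintype.card α) ^ K) + 1 :=
          Nat.add_le_add_right (Nat.mul_le_mul_left _ ih) 1
      _ = (K + 1) * (2 * Fintype.card α) ^ (K + 1) + 1 := by ring
      _ ≤ (K + 1) * (2 * Fintype.card α) ^ (K + 1) + (2 * Fintype.card α) ^ (K + 1) :=
          Nat.add_le_add_left (Nat.one_le_pow _ _ (by omega)) _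
      _ = (K + 1 + 1) * (2 * Fintype.card α) ^ (K + 1) := by ring

/-- Letters allowed after the word `w` keeping it reduced. -/
def allowedF (w : List (α × Bool)) : Finset (α × Bool) :=
  match w.getLast? with
  | none => Finset.univ
  | some y => Finset.univ.erase (y.1, !y.2)

/-- Reduced words of length exactly `K`. -/
def EF : ℕ → Finset (List (α × Bool))
  | 0 => {[]}
  | K + 1 => (EF K).biUnion fun w => (allowedF w).image fun x => w ++ [x]

lemma mem_EF_sound : ∀ (K : ℕ) (w : List (α × Bool)), w ∈ EF K → RD w ∧ w.length = K := by
  intro K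
  induction K with
  | zero =>
    intro w hw
    rw [EF, Finset.mem_singleton] at hw
    subst hw
    exact ⟨rd_nil, rfl⟩
  | succ K ih =>
    intro w hw
    rw [EF, Finset.mem_biUnion] at hw
    obtain ⟨w₀, hw₀, hw⟩ := hw
    rw [Finset.mem_image] at hw
    obtain ⟨x, hx, rfl⟩ := hw
    obtain ⟨hrd₀, hlen₀⟩ := ih w₀ hw₀
    refine ⟨?_, by simp [hlen₀]⟩
    rw [RD, List.Chain', List.isChain_append]
    refine ⟨hrd₀, List.isChain_singleton x, ?_⟩
    intro p hp q hq
    simp only [List.head?_cons, Option.mem_some_iff] at hq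
    subst hq
    rw [allowedF] at hx
    rcases hgl : w₀.getLast? with _ | y
    · simp [hgl] at hp
    · rw [hgl] at hp hx
      simp only [Option.mem_some_iff] at hp
      subst hp
      simp only [Finset.mem_erase] at hx
      rintro ⟨h1, h2⟩
      exact hx.1 (by cases x; cases y; simp_all)

lemma mem_EF_complete : ∀ (K : ℕ) (w : List (α × Bool)), RD w → w.length = K → w ∈ EF K := by
  intro K
  induction K with
  | zero =>
    intro w _ hlen
    rw [List.length_eq_zero_iff] at hlen
    simp [EF, hlen]
  | succ K ih =>
    intro w hrd hlen
    rcases List.eq_nil_or_concat w with rfl | ⟨w₀, x, rfl⟩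
    · simp at hlen
    · simp only [List.concat_eq_append] at hrd hlen ⊢
      rw [EF, Finset.mem_biUnion]
      have hlen₀ : w₀.length = K := by simpa using hlen
      refine ⟨w₀, ih w₀ (rd_append_left hrd) hlen₀, ?_⟩
      rw [Finset.mem_image]
      refine ⟨x, ?_, rfl⟩
      rw [allowedF]
      rcases hgl : w₀.getLast? with _ | y
      · exact Finset.mem_univ _
      · rw [RD, List.Chain', List.isChain_append] at hrd
        have hR := hrd.2.2 y hgl x (by simp)
        rw [Finset.mem_erase]
        refine ⟨?_, Finset.mem_univ _⟩
        intro hxy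
        exact hR (by rw [hxy]; simp)

lemma card_EF_lower :
    ∀ K : ℕ, (2 * Fintype.card α - 1) ^ K ≤ (EF (α := α) K).card := by
  intro K
  induction K with
  | zero => simp [EF]
  | succ K ih =>
    rw [EF]
    have hdisj : ∀ w₁ ∈ EF (α := α) K, ∀ w₂ ∈ EF (α := α) K, w₁ ≠ w₂ →
        Disjoint ((allowedF w₁).image fun x => w₁ ++ [x])
          ((allowedF w₂).image fun x => w₂ ++ [x]) := by
      intro w₁ h₁ w₂ h₂ hne
      rw [Finset.disjoint_left]
      intro l hl₁ hl₂
      rw [Finset.mem_image] at hl₁ hl₂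
      obtain ⟨x₁, _, rfl⟩ := hl₁
      obtain ⟨x₂, _, heq⟩ := hl₂
      have hlen : w₂.length = w₁.length := by
        rw [(mem_EF_sound K w₁ h₁).2, (mem_EF_sound K w₂ h₂).2]
      exact hne ((List.append_inj heq.symm hlen.symm).1.symm
        ▸ rfl)
    rw [Finset.card_biUnion hdisj]
    have hcard : ∀ w ∈ EF (α := α) K,
        2 * Fintype.card α - 1 ≤ ((allowedF w).image fun x => w ++ [x]).card := by
      intro w _
      rw [Finset.card_image_of_injective _ (fun x₁ x₂ h =>
        by simpa using List.append_inj_right h rfl)]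
      rw [allowedF]
      rcases w.getLast? with _ | y
      · calc 2 * Fintype.card α - 1 ≤ Fintype.card (α × Bool) := by
              simp [Fintype.card_prod]; omega
          _ = (Finset.univ : Finset (α × Bool)).card := (Finset.card_univ).symm
      · rw [Finset.card_erase_of_mem (Finset.mem_univ _), Finset.card_univ]
        have hc1 : 1 ≤ Fintype.card α := Fintype.card_pos_iff.mpr ⟨y.1⟩
        simp only [Fintype.card_prod, Fintype.card_bool]
        omega
    calc (2 * Fintype.card α - 1) ^ (K + 1)
        = (2 * Fintype.card α - 1) ^ K * (2 * Fintype.card α - 1) := by ring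
      _ ≤ (EF (α := α) K).card * (2 * Fintype.card α - 1) :=
          Nat.mul_le_mul_right _ ih
      _ = ∑ _w ∈ EF (α := α) K, (2 * Fintype.card α - 1) := by
          rw [Finset.sum_const, smul_eq_mul, mul_comm]
      _ ≤ ∑ w ∈ EF (α := α) K, ((allowedF w).image fun x => w ++ [x]).card :=
          Finset.sum_le_sum hcard

/-- All elements of norm at most `m`, as a `Finset`. -/
def TF (m : ℕ) : Finset (FreeGroup α) := (AllW m).image FreeGroup.mk

lemma length_le_of_mem_AllW : ∀ (K : ℕ) (l : List (α × Bool)), l ∈ AllW K → l.length ≤ K := by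
  intro K
  induction K with
  | zero =>
    intro l hl
    rw [AllW, Finset.mem_singleton] at hl
    simp [hl]
  | succ K ih =>
    intro l hl
    rw [AllW, Finset.mem_insert] at hl
    rcases hl with rfl | hl
    · simp
    · rw [Finset.mem_image] at hl
      obtain ⟨⟨x, t⟩, hp, rfl⟩ := hl
      have := ih t (Finset.mem_product.mp hp).2
      simpa using Nat.succ_le_succ this

lemma mem_TF {m : ℕ} {x : FreeGroup α} : x ∈ TF m ↔ FreeGroup.norm x ≤ m := by
  constructor
  · intro hx
    rw [TF, Finset.mem_image] at hx
    obtain ⟨l, hl, rfl⟩ := hx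
    calc FreeGroup.norm (FreeGroup.mk l) ≤ l.length := FreeGroup.norm_mk_le
      _ ≤ m := length_le_of_mem_AllW m l hl
  · intro hx
    rw [TF, Finset.mem_image]
    exact ⟨x.toWord, mem_AllW m _ hx, FreeGroup.mk_toWord⟩

lemma card_TF_lower (m : ℕ) : (2 * Fintype.card α - 1) ^ m ≤ (TF (α := α) m).card := by
  calc (2 * Fintype.card α - 1) ^ m ≤ (EF (α := α) m).card := card_EF_lower m
    _ ≤ (TF (α := α) m).card := by
        apply Finset.card_le_card_of_injOn FreeGroup.mk
        · intro w hw
          obtain ⟨hrd, hlen⟩ := mem_EF_sound m w hw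
          rw [Finset.mem_coe, mem_TF]
          calc FreeGroup.norm (FreeGroup.mk w) ≤ w.length := FreeGroup.norm_mk_le
            _ ≤ m := hlen.le
        · intro w₁ h₁ w₂ h₂ heq
          have r₁ := reduce_eq_self (mem_EF_sound m w₁ (by simpa using h₁)).1
          have r₂ := reduce_eq_self (mem_EF_sound m w₂ (by simpa using h₂)).1
          have := congrArg FreeGroup.toWord heq
          rwa [FreeGroup.toWord_mk, FreeGroup.toWord_mk, r₁, r₂] at this

/-- Count of `b` of norm at most `m` which cancel at least half their length
on the left against a fixed word `u`. -/
lemma card_badLeft_le (m : ℕ) (u : FreeGroup α) :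
    ((TF m).filter fun b => FreeGroup.norm b ≤ 2 * cancel u b).card ≤
      (Finset.range (m + 1) ×ˢ AllW (α := α) (m / 2)).card := by
  apply Finset.card_le_card_of_injOn
    (fun b => (cancel u b, b.toWord.drop (cancel u b)))
  · intro b hb
    simp only [Finset.mem_coe] at hb ⊢
    rw [Finset.mem_filter, mem_TF] at hb
    obtain ⟨hbm, hbc⟩ := hb
    have hcb := cancel_le_right u b
    rw [Finset.mem_product]
    constructor
    · rw [Finset.mem_range]; omega
    · apply mem_AllW
      rw [List.length_drop, ← norm_eq_length]
      rw [Nat.le_div_iff_mul_le (by norm_num)]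
      omega
  · intro b₁ h₁ b₂ h₂ heq
    simp only [Prod.mk.injEq] at heq
    obtain ⟨hc, hs⟩ := heq
    apply FreeGroup.toWord_injective
    rw [hc] at hs
    rw [toWord_eq_left u b₁, toWord_eq_left u b₂, hc, hs]

/-- Count of `b` of norm at most `m` which cancel at least half their length
on the right against a fixed word `u`. -/
lemma card_badRight_le (m : ℕ) (u : FreeGroup α) :
    ((TF m).filter fun b => FreeGroup.norm b ≤ 2 * cancel b u).card ≤
      (Finset.range (m + 1) ×ˢ AllW (α := α) (m / 2)).card := by
  apply Finset.card_le_card_of_injOn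
    (fun b => (cancel b u, b.toWord.take (b.toWord.length - cancel b u)))
  · intro b hb
    simp only [Finset.mem_coe] at hb ⊢
    rw [Finset.mem_filter, mem_TF] at hb
    obtain ⟨hbm, hbc⟩ := hb
    have hcb := cancel_le_left b u
    rw [Finset.mem_product]
    constructor
    · rw [Finset.mem_range]; omega
    · apply mem_AllW
      rw [List.length_take, ← norm_eq_length]
      have h1 : FreeGroup.norm b - cancel b u ≤ m / 2 := by
        rw [Nat.le_div_iff_mul_le (by norm_num)]
        omega
      omega
  · intro b₁ h₁ b₂ h₂ heq
    simp only [Prod.mk.injEq] at heq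
    obtain ⟨hc, hs⟩ := heq
    apply FreeGroup.toWord_injective
    rw [hc] at hs
    rw [toWord_eq_right u b₁, toWord_eq_right u b₂, hc, hs]

end Counting

instance hasRemnantDecidable {α β : Type*} [Fintype α] [DecidableEq α] [DecidableEq β]
    (η : FreeGroup α →* FreeGroup β) : Decidable (HasRemnant η) :=
  decidable_of_iff
    (∀ i : α, maxLeftCancel η i + maxRightCancel η i < FreeGroup.norm (η (FreeGroup.of i)))
    Iff.rfl

section Tuples

variable {n : ℕ}

/-- All `n`-tuples of words of norm at most `m`. -/
def Tup (n m : ℕ) : Finset (Fin n → FreeGroup (Fin n)) :=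
  Fintype.piFinset fun _ => TF m

lemma mem_Tup {m : ℕ} {t : Fin n → FreeGroup (Fin n)} :
    t ∈ Tup n m ↔ ∀ i, FreeGroup.norm (t i) ≤ m := by
  rw [Tup, Fintype.mem_piFinset]
  exact forall_congr' fun i => mem_TF

lemma card_Tup (m : ℕ) : (Tup n m).card = (TF (α := Fin n) m).card ^ n := by
  rw [Tup, Fintype.card_piFinset]
  simp

def BadL (n m : ℕ) (i j : Fin n) (e : Bool) : Finset (Fin n → FreeGroup (Fin n)) :=
  (Tup n m).filter fun t => FreeGroup.norm (t i) ≤ 2 * cancel (bpow (t j) e) (t i)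

def BadR (n m : ℕ) (i j : Fin n) (e : Bool) : Finset (Fin n → FreeGroup (Fin n)) :=
  (Tup n m).filter fun t => FreeGroup.norm (t i) ≤ 2 * cancel (t i) (bpow (t j) e)

lemma bpow_true (w : FreeGroup (Fin n)) : bpow w true = w := rfl

lemma hasRemnant_of (hn : 1 < n) (t : Fin n → FreeGroup (Fin n))
    (h : ∀ i j e, j ≠ i →
      2 * cancel (bpow (t j) e) (t i) < FreeGroup.norm (t i) ∧
      2 * cancel (t i) (bpow (t j) e) < FreeGroup.norm (t i)) :
    HasRemnant (FreeGroup.lift t) := by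
  intro i
  have : Nontrivial (Fin n) := ⟨⟨⟨0, by omega⟩, ⟨1, by omega⟩, by simp [Fin.ext_iff]⟩⟩
  obtain ⟨j, hji⟩ := exists_ne i
  have hpos : 0 < FreeGroup.norm (t i) := by
    have := (h i j true hji).1
    omega
  have hne : t i ≠ 1 := by
    intro h1
    rw [h1, FreeGroup.norm_one] at hpos
    exact absurd hpos (by omega)
  have hself := self_cancel (t i) hne
  have hL : maxLeftCancel (FreeGroup.lift t) i ≤ (FreeGroup.norm (t i) - 1) / 2 := by
    apply Finset.sup_le
    intro je hje
    rw [Finset.mem_filter] at hje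
    have hval : 2 * cancel (bpow ((FreeGroup.lift t) (FreeGroup.of je.1)) je.2)
        ((FreeGroup.lift t) (FreeGroup.of i)) < FreeGroup.norm (t i) := by
      rw [FreeGroup.lift_apply_of, FreeGroup.lift_apply_of]
      by_cases hj1 : je.1 = i
      · have hj2 : je.2 = true := by
          rcases je with ⟨j1, j2⟩
          cases j2
          · exact absurd (by rw [show j1 = i from hj1]) hje.2
          · rfl
        rw [hj1, hj2, bpow_true]
        exact hself
      · exact (h i je.1 je.2 hj1).1
    rw [Nat.le_div_iff_mul_le (by norm_num)]
    rw [FreeGroup.lift_apply_of] at hval ⊢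
    omega
  have hR : maxRightCancel (FreeGroup.lift t) i ≤ (FreeGroup.norm (t i) - 1) / 2 := by
    apply Finset.sup_le
    intro je hje
    rw [Finset.mem_filter] at hje
    have hval : 2 * cancel ((FreeGroup.lift t) (FreeGroup.of i))
        (bpow ((FreeGroup.lift t) (FreeGroup.of je.1)) je.2) < FreeGroup.norm (t i) := by
      rw [FreeGroup.lift_apply_of, FreeGroup.lift_apply_of]
      by_cases hj1 : je.1 = i
      · have hj2 : je.2 = true := by
          rcases je with ⟨j1, j2⟩
          cases j2
          · exact absurd (by rw [show j1 = i from hj1]) hje.2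
          · rfl
        rw [hj1, hj2, bpow_true]
        exact hself
      · exact (h i je.1 je.2 hj1).2
    rw [Nat.le_div_iff_mul_le (by norm_num)]
    rw [FreeGroup.lift_apply_of] at hval ⊢
    omega
  have hd := Nat.div_mul_le_self (FreeGroup.norm (t i) - 1) 2
  rw [FreeGroup.lift_apply_of]
  omega

/-- The index set of bad events. -/
def Idx (n : ℕ) : Finset ((Fin n × Fin n) × Bool) :=
  Finset.univ.filter fun q => q.1.2 ≠ q.1.1

lemma coverage (hn : 1 < n) (m : ℕ) :
    Tup n m ⊆ ((Tup n m).filter fun t => HasRemnant (FreeGroup.lift t)) ∪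
      (Idx n).biUnion fun q => BadL n m q.1.1 q.1.2 q.2 ∪ BadR n m q.1.1 q.1.2 q.2 := by
  intro t ht
  by_cases hrem : HasRemnant (FreeGroup.lift t)
  · exact Finset.mem_union_left _ (Finset.mem_filter.mpr ⟨ht, hrem⟩)
  · apply Finset.mem_union_right
    rw [Finset.mem_biUnion]
    by_contra hno
    push_neg at hno
    apply hrem
    apply hasRemnant_of hn
    intro i j e hji
    have hq := hno ((i, j), e) (by simp [Idx, hji])
    rw [Finset.mem_union] at hq
    push_neg at hq
    obtain ⟨h1, h2⟩ := hq
    constructor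
    · by_contra hcon
      push_neg at hcon
      exact h1 (Finset.mem_filter.mpr ⟨ht, hcon⟩)
    · by_contra hcon
      push_neg at hcon
      exact h2 (Finset.mem_filter.mpr ⟨ht, hcon⟩)

lemma card_pi_rest (hn : 1 < n) (m : ℕ) (i j : Fin n) (hji : j ≠ i) :
    (Fintype.piFinset fun k : Fin n =>
      if k = i ∨ k = j then ({1} : Finset (FreeGroup (Fin n))) else TF m).card =
      (TF (α := Fin n) m).card ^ (n - 2) := by
  rw [Fintype.card_piFinset]
  have heach : ∀ k : Fin n,
      ((if k = i ∨ k = j then ({1} : Finset (FreeGroup (Fin n))) else TF m)).card =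
      if k = i ∨ k = j then 1 else (TF (α := Fin n) m).card := by
    intro k
    by_cases hk : k = i ∨ k = j <;> simp [hk]
  rw [Finset.prod_congr rfl fun k _ => heach k]
  rw [Finset.prod_ite]
  rw [Finset.prod_const_one, Finset.prod_const, one_mul]
  congr 1
  have hfilter : Finset.univ.filter (fun k : Fin n => k = i ∨ k = j) = {i, j} := by
    ext k
    simp [Finset.mem_insert]
  have hcard2 : (Finset.univ.filter fun k : Fin n => k = i ∨ k = j).card = 2 := by
    rw [hfilter, Finset.card_insert_of_notMem (by simpa using hji.symm), Finset.card_singleton]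
  have := Finset.card_filter_add_card_filter_not
    (s := (Finset.univ : Finset (Fin n))) (p := fun k => k = i ∨ k = j)
  rw [Finset.card_univ, Fintype.card_fin] at this
  omega

lemma card_pairL_le (m : ℕ) (e : Bool) :
    (((TF (α := Fin n) m) ×ˢ (TF m)).filter fun p =>
        FreeGroup.norm p.2 ≤ 2 * cancel (bpow p.1 e) p.2).card ≤
      (TF (α := Fin n) m).card * (Finset.range (m + 1) ×ˢ AllW (α := Fin n) (m / 2)).card := by
  have hsub : (((TF (α := Fin n) m) ×ˢ (TF m)).filter fun p =>
      FreeGroup.norm p.2 ≤ 2 * cancel (bpow p.1 e) p.2) ⊆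
      (TF (α := Fin n) m).biUnion fun a =>
        {a} ×ˢ ((TF m).filter fun b => FreeGroup.norm b ≤ 2 * cancel (bpow a e) b) := by
    intro p hp
    rw [Finset.mem_filter, Finset.mem_product] at hp
    rw [Finset.mem_biUnion]
    exact ⟨p.1, hp.1.1, by
      rw [Finset.mem_product, Finset.mem_singleton]
      exact ⟨rfl, Finset.mem_filter.mpr ⟨hp.1.2, hp.2⟩⟩⟩
  calc (((TF (α := Fin n) m) ×ˢ (TF m)).filter fun p =>
        FreeGroup.norm p.2 ≤ 2 * cancel (bpow p.1 e) p.2).card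
      ≤ ((TF (α := Fin n) m).biUnion fun a =>
          {a} ×ˢ ((TF m).filter fun b => FreeGroup.norm b ≤ 2 * cancel (bpow a e) b)).card :=
        Finset.card_le_card hsub
    _ ≤ ∑ a ∈ TF (α := Fin n) m,
          ({a} ×ˢ ((TF m).filter fun b => FreeGroup.norm b ≤ 2 * cancel (bpow a e) b)).card :=
        Finset.card_biUnion_le
    _ ≤ ∑ _a ∈ TF (α := Fin n) m,
          (Finset.range (m + 1) ×ˢ AllW (α := Fin n) (m / 2)).card := by
        apply Finset.sum_le_sum
        intro a _
        rw [Finset.card_product, Finset.card_singleton, one_mul]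
        exact card_badLeft_le m (bpow a e)
    _ = (TF (α := Fin n) m).card * (Finset.range (m + 1) ×ˢ AllW (α := Fin n) (m / 2)).card := by
        rw [Finset.sum_const, smul_eq_mul]

lemma card_pairR_le (m : ℕ) (e : Bool) :
    (((TF (α := Fin n) m) ×ˢ (TF m)).filter fun p =>
        FreeGroup.norm p.2 ≤ 2 * cancel p.2 (bpow p.1 e)).card ≤
      (TF (α := Fin n) m).card * (Finset.range (m + 1) ×ˢ AllW (α := Fin n) (m / 2)).card := by
  have hsub : (((TF (α := Fin n) m) ×ˢ (TF m)).filter fun p =>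
      FreeGroup.norm p.2 ≤ 2 * cancel p.2 (bpow p.1 e)) ⊆
      (TF (α := Fin n) m).biUnion fun a =>
        {a} ×ˢ ((TF m).filter fun b => FreeGroup.norm b ≤ 2 * cancel b (bpow a e)) := by
    intro p hp
    rw [Finset.mem_filter, Finset.mem_product] at hp
    rw [Finset.mem_biUnion]
    exact ⟨p.1, hp.1.1, by
      rw [Finset.mem_product, Finset.mem_singleton]
      exact ⟨rfl, Finset.mem_filter.mpr ⟨hp.1.2, hp.2⟩⟩⟩
  calc (((TF (α := Fin n) m) ×ˢ (TF m)).filter fun p =>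
        FreeGroup.norm p.2 ≤ 2 * cancel p.2 (bpow p.1 e)).card
      ≤ ((TF (α := Fin n) m).biUnion fun a =>
          {a} ×ˢ ((TF m).filter fun b => FreeGroup.norm b ≤ 2 * cancel b (bpow a e))).card :=
        Finset.card_le_card hsub
    _ ≤ ∑ a ∈ TF (α := Fin n) m,
          ({a} ×ˢ ((TF m).filter fun b => FreeGroup.norm b ≤ 2 * cancel b (bpow a e))).card :=
        Finset.card_biUnion_le
    _ ≤ ∑ _a ∈ TF (α := Fin n) m,
          (Finset.range (m + 1) ×ˢ AllW (α := Fin n) (m / 2)).card := by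
        apply Finset.sum_le_sum
        intro a _
        rw [Finset.card_product, Finset.card_singleton, one_mul]
        exact card_badRight_le m (bpow a e)
    _ = (TF (α := Fin n) m).card * (Finset.range (m + 1) ×ˢ AllW (α := Fin n) (m / 2)).card := by
        rw [Finset.sum_const, smul_eq_mul]

lemma card_BadL_le (hn : 1 < n) (m : ℕ) (i j : Fin n) (e : Bool) (hji : j ≠ i) :
    (BadL n m i j e).card ≤
      (TF (α := Fin n) m).card ^ (n - 1) *
        (Finset.range (m + 1) ×ˢ AllW (α := Fin n) (m / 2)).card := by
  have hinj : (BadL n m i j e).card ≤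
      ((((TF (α := Fin n) m) ×ˢ (TF m)).filter fun p =>
        FreeGroup.norm p.2 ≤ 2 * cancel (bpow p.1 e) p.2) ×ˢ
        (Fintype.piFinset fun k : Fin n =>
          if k = i ∨ k = j then ({1} : Finset (FreeGroup (Fin n))) else TF m)).card := by
    apply Finset.card_le_card_of_injOn
      (fun t => ((t j, t i), fun k => if k = i ∨ k = j then 1 else t k))
    · intro t ht
      simp only [Finset.mem_coe] at ht ⊢
      rw [BadL, Finset.mem_filter] at ht
      obtain ⟨htup, hcond⟩ := ht
      rw [mem_Tup] at htup
      rw [Finset.mem_product]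
      constructor
      · rw [Finset.mem_filter, Finset.mem_product]
        exact ⟨⟨mem_TF.mpr (htup j), mem_TF.mpr (htup i)⟩, hcond⟩
      · rw [Fintype.mem_piFinset]
        intro k
        by_cases hk : k = i ∨ k = j <;> simp [hk, mem_TF.mpr (htup k)]
    · intro t₁ h₁ t₂ h₂ heq
      simp only [Prod.mk.injEq] at heq
      obtain ⟨⟨hj', hi'⟩, hfun⟩ := heq
      funext k
      by_cases hki : k = i
      · rw [hki]; exact hi'
      · by_cases hkj : k = j
        · rw [hkj]; exact hj'
        · have := congrFun hfun k
          simpa [hki, hkj] using this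
  calc (BadL n m i j e).card
      ≤ _ := hinj
    _ = (((TF (α := Fin n) m) ×ˢ (TF m)).filter fun p =>
          FreeGroup.norm p.2 ≤ 2 * cancel (bpow p.1 e) p.2).card *
          (TF (α := Fin n) m).card ^ (n - 2) := by
        rw [Finset.card_product, card_pi_rest hn m i j hji]
    _ ≤ ((TF (α := Fin n) m).card *
          (Finset.range (m + 1) ×ˢ AllW (α := Fin n) (m / 2)).card) *
          (TF (α := Fin n) m).card ^ (n - 2) :=
        Nat.mul_le_mul_right _ (card_pairL_le m e)
    _ = ((TF (α := Fin n) m).card ^ (n - 2) * (TF (α := Fin n) m).card) *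
          (Finset.range (m + 1) ×ˢ AllW (α := Fin n) (m / 2)).card := by ring
    _ = (TF (α := Fin n) m).card ^ (n - 1) *
          (Finset.range (m + 1) ×ˢ AllW (α := Fin n) (m / 2)).card := by
        rw [← pow_succ]
        congr 2
        omega

lemma card_BadR_le (hn : 1 < n) (m : ℕ) (i j : Fin n) (e : Bool) (hji : j ≠ i) :
    (BadR n m i j e).card ≤
      (TF (α := Fin n) m).card ^ (n - 1) *
        (Finset.range (m + 1) ×ˢ AllW (α := Fin n) (m / 2)).card := by
  have hinj : (BadR n m i j e).card ≤
      ((((TF (α := Fin n) m) ×ˢ (TF m)).filter fun p =>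
        FreeGroup.norm p.2 ≤ 2 * cancel p.2 (bpow p.1 e)) ×ˢ
        (Fintype.piFinset fun k : Fin n =>
          if k = i ∨ k = j then ({1} : Finset (FreeGroup (Fin n))) else TF m)).card := by
    apply Finset.card_le_card_of_injOn
      (fun t => ((t j, t i), fun k => if k = i ∨ k = j then 1 else t k))
    · intro t ht
      simp only [Finset.mem_coe] at ht ⊢
      rw [BadR, Finset.mem_filter] at ht
      obtain ⟨htup, hcond⟩ := ht
      rw [mem_Tup] at htup
      rw [Finset.mem_product]
      constructor
      · rw [Finset.mem_filter, Finset.mem_product]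
        exact ⟨⟨mem_TF.mpr (htup j), mem_TF.mpr (htup i)⟩, hcond⟩
      · rw [Fintype.mem_piFinset]
        intro k
        by_cases hk : k = i ∨ k = j <;> simp [hk, mem_TF.mpr (htup k)]
    · intro t₁ h₁ t₂ h₂ heq
      simp only [Prod.mk.injEq] at heq
      obtain ⟨⟨hj', hi'⟩, hfun⟩ := heq
      funext k
      by_cases hki : k = i
      · rw [hki]; exact hi'
      · by_cases hkj : k = j
        · rw [hkj]; exact hj'
        · have := congrFun hfun k
          simpa [hki, hkj] using this
  calc (BadR n m i j e).card
      ≤ _ := hinj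
    _ = (((TF (α := Fin n) m) ×ˢ (TF m)).filter fun p =>
          FreeGroup.norm p.2 ≤ 2 * cancel p.2 (bpow p.1 e)).card *
          (TF (α := Fin n) m).card ^ (n - 2) := by
        rw [Finset.card_product, card_pi_rest hn m i j hji]
    _ ≤ ((TF (α := Fin n) m).card *
          (Finset.range (m + 1) ×ˢ AllW (α := Fin n) (m / 2)).card) *
          (TF (α := Fin n) m).card ^ (n - 2) :=
        Nat.mul_le_mul_right _ (card_pairR_le m e)
    _ = ((TF (α := Fin n) m).card ^ (n - 2) * (TF (α := Fin n) m).card) *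
          (Finset.range (m + 1) ×ˢ AllW (α := Fin n) (m / 2)).card := by ring
    _ = (TF (α := Fin n) m).card ^ (n - 1) *
          (Finset.range (m + 1) ×ˢ AllW (α := Fin n) (m / 2)).card := by
        rw [← pow_succ]
        congr 2
        omega

/-- The master counting estimate. -/
lemma master_count (hn : 1 < n) (m : ℕ) :
    (Tup n m).card ≤ ((Tup n m).filter fun t => HasRemnant (FreeGroup.lift t)).card +
      (2 * n ^ 2) * (2 * ((TF (α := Fin n) m).card ^ (n - 1) *
        (Finset.range (m + 1) ×ˢ AllW (α := Fin n) (m / 2)).card)) := by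
  calc (Tup n m).card
      ≤ (((Tup n m).filter fun t => HasRemnant (FreeGroup.lift t)) ∪
          (Idx n).biUnion fun q => BadL n m q.1.1 q.1.2 q.2 ∪ BadR n m q.1.1 q.1.2 q.2).card :=
        Finset.card_le_card (coverage hn m)
    _ ≤ ((Tup n m).filter fun t => HasRemnant (FreeGroup.lift t)).card +
          ((Idx n).biUnion fun q => BadL n m q.1.1 q.1.2 q.2 ∪ BadR n m q.1.1 q.1.2 q.2).card :=
        Finset.card_union_le _ _
    _ ≤ ((Tup n m).filter fun t => HasRemnant (FreeGroup.lift t)).card +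
          ∑ q ∈ Idx n, (BadL n m q.1.1 q.1.2 q.2 ∪ BadR n m q.1.1 q.1.2 q.2).card :=
        Nat.add_le_add_left Finset.card_biUnion_le _
    _ ≤ ((Tup n m).filter fun t => HasRemnant (FreeGroup.lift t)).card +
          ∑ _q ∈ Idx n, (2 * ((TF (α := Fin n) m).card ^ (n - 1) *
            (Finset.range (m + 1) ×ˢ AllW (α := Fin n) (m / 2)).card)) := by
        apply Nat.add_le_add_left
        apply Finset.sum_le_sum
        intro q hq
        have hji : q.1.2 ≠ q.1.1 := by
          rw [Idx, Finset.mem_filter] at hq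
          exact hq.2
        calc (BadL n m q.1.1 q.1.2 q.2 ∪ BadR n m q.1.1 q.1.2 q.2).card
            ≤ (BadL n m q.1.1 q.1.2 q.2).card + (BadR n m q.1.1 q.1.2 q.2).card :=
              Finset.card_union_le _ _
          _ ≤ 2 * ((TF (α := Fin n) m).card ^ (n - 1) *
              (Finset.range (m + 1) ×ˢ AllW (α := Fin n) (m / 2)).card) := by
              have h1 := card_BadL_le hn m q.1.1 q.1.2 q.2 hji
              have h2 := card_BadR_le hn m q.1.1 q.1.2 q.2 hji
              omega
    _ ≤ ((Tup n m).filter fun t => HasRemnant (FreeGroup.lift t)).card +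
          (2 * n ^ 2) * (2 * ((TF (α := Fin n) m).card ^ (n - 1) *
            (Finset.range (m + 1) ×ˢ AllW (α := Fin n) (m / 2)).card)) := by
        apply Nat.add_le_add_left
        rw [Finset.sum_const, smul_eq_mul]
        apply Nat.mul_le_mul_right
        calc (Idx n).card ≤ Finset.univ.card := Finset.card_le_card (Finset.filter_subset _ _)
          _ = 2 * n ^ 2 := by
              rw [Finset.card_univ]
              simp [Fintype.card_prod, Fintype.card_bool]
              ring

end Tuples

end RemnantProof

open RemnantProof Filter

/-- For `n > 1` and any `ε > 0` there is `M > 0` such that for all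
`m ≥ M`, among the endomorphisms `φ` of the free group of rank `n` (identified with
`n`-tuples of words) with `|φ(gᵢ)| ≤ m` for all `i`, the proportion with remnant
exceeds `1 - ε`. -/
theorem proportion_hasRemnant_gt {n : ℕ} (hn : 1 < n) :
    ∀ ε : ℝ, 0 < ε → ∃ M : ℕ, 0 < M ∧ ∀ m : ℕ, M ≤ m →
      1 - ε <
        (Set.ncard {t : Fin n → FreeGroup (Fin n) |
            (∀ i, (t i).norm ≤ m) ∧ HasRemnant (FreeGroup.lift t)} : ℝ) /
          (Set.ncard {t : Fin n → FreeGroup (Fin n) | ∀ i, (t i).norm ≤ m} : ℝ) := by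
  intro ε hε
  have hn1 : (1:ℝ) ≤ 2 * n := by
    have : (1:ℝ) ≤ (n:ℝ) := by exact_mod_cast Nat.one_le_of_lt hn
    nlinarith
  have hn2' : (2:ℝ) ≤ (n:ℝ) := by exact_mod_cast hn
  have hDpos : (0:ℝ) < 2 * (n:ℝ) - 1 := by linarith
  set r : ℝ := Real.sqrt (2 * n) / (2 * (n:ℝ) - 1) with hr_def
  have hs_nonneg : (0:ℝ) ≤ Real.sqrt (2 * n) := Real.sqrt_nonneg _
  have hs_pos : (0:ℝ) < Real.sqrt (2 * n) := Real.sqrt_pos.mpr (by nlinarith)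
  have hr_pos : 0 < r := div_pos hs_pos hDpos
  have hr_lt1 : r < 1 := by
    rw [hr_def, div_lt_one hDpos]
    have h1 : Real.sqrt (2 * n) < Real.sqrt ((2 * (n:ℝ) - 1) ^ 2) := by
      apply Real.sqrt_lt_sqrt (by nlinarith)
      have hn2 : (2:ℝ) ≤ (n:ℝ) := by exact_mod_cast hn
      nlinarith
    rwa [Real.sqrt_sq hDpos.le] at h1
  -- the dominating sequence tends to zero
  have hsum : Summable (fun k : ℕ => (k:ℝ) ^ 2 * r ^ k) :=
    summable_pow_mul_geometric_of_norm_lt_one 2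
      (by rw [Real.norm_eq_abs, abs_of_nonneg hr_pos.le]; exact hr_lt1)
  have htend0 : Tendsto (fun k : ℕ => (k:ℝ) ^ 2 * r ^ k) atTop (nhds 0) :=
    hsum.tendsto_atTop_zero
  have htend1 : Tendsto (fun m : ℕ => ((m + 1 : ℕ):ℝ) ^ 2 * r ^ (m + 1)) atTop (nhds 0) :=
    htend0.comp (tendsto_add_atTop_nat 1)
  have htend2 : Tendsto
      (fun m : ℕ => (4 * (n:ℝ) ^ 2 / r) * (((m + 1 : ℕ):ℝ) ^ 2 * r ^ (m + 1)))
      atTop (nhds 0) := by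
    have := htend1.const_mul (4 * (n:ℝ) ^ 2 / r)
    simpa using this
  obtain ⟨M₀, hM₀⟩ := eventually_atTop.mp (htend2.eventually_lt_const hε)
  refine ⟨M₀ + 1, Nat.succ_pos _, ?_⟩
  intro m hm
  -- identify the sets with finsets
  have hset1 : {t : Fin n → FreeGroup (Fin n) | ∀ i, (t i).norm ≤ m} = ↑(Tup n m) := by
    ext t
    simp [mem_Tup]
  have hset2 : {t : Fin n → FreeGroup (Fin n) |
      (∀ i, (t i).norm ≤ m) ∧ HasRemnant (FreeGroup.lift t)} =
      ↑((Tup n m).filter fun t => HasRemnant (FreeGroup.lift t)) := by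
    ext t
    simp [mem_Tup, Finset.mem_filter]
  rw [hset1, hset2, Set.ncard_coe_finset, Set.ncard_coe_finset]
  set N := (TF (α := Fin n) m).card with hN_def
  set PB := (Finset.range (m + 1) ×ˢ AllW (α := Fin n) (m / 2)).card with hPB_def
  set G := ((Tup n m).filter fun t => HasRemnant (FreeGroup.lift t)).card with hG_def
  -- basic bounds
  have hDN : (2 * n - 1) ^ m ≤ N := by
    have := card_TF_lower (α := Fin n) m
    simpa using this
  have hNpos : 0 < N := by
    have h3 : (1:ℕ) ≤ (2 * n - 1) ^ m := Nat.one_le_pow _ _ (by omega)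
    omega
  have hmaster : N ^ n ≤ G + (2 * n ^ 2) * (2 * (N ^ (n - 1) * PB)) := by
    have h1 := master_count hn m
    rw [card_Tup] at h1
    exact h1
  -- bound PB
  have hPB : PB ≤ (m + 1) ^ 2 * (2 * n) ^ (m / 2) := by
    rw [hPB_def, Finset.card_product, Finset.card_range]
    have h1 := card_AllW (α := Fin n) (by simp; omega) (m / 2)
    simp only [Fintype.card_fin] at h1
    calc (m + 1) * (AllW (α := Fin n) (m / 2)).card
        ≤ (m + 1) * ((m / 2 + 1) * (2 * n) ^ (m / 2)) := Nat.mul_le_mul_left _ h1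
      _ ≤ (m + 1) * ((m + 1) * (2 * n) ^ (m / 2)) := by
          apply Nat.mul_le_mul_left
          apply Nat.mul_le_mul_right
          omega
      _ = (m + 1) ^ 2 * (2 * n) ^ (m / 2) := by ring
  -- real versions
  have hcastD : ((2 * n - 1 : ℕ) : ℝ) = 2 * (n:ℝ) - 1 := by
    push_cast [Nat.cast_sub (by omega : 1 ≤ 2 * n)]
    ring
  have hDm_le_N : (2 * (n:ℝ) - 1) ^ m ≤ (N:ℝ) := by
    rw [← hcastD]
    exact_mod_cast hDN
  have h2n_half : ((2 * n : ℕ):ℝ) ^ (m / 2) ≤ Real.sqrt (2 * n) ^ m := by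
    have h1 : ((2 * n : ℕ):ℝ) = Real.sqrt (2 * n) ^ 2 := by
      rw [Real.sq_sqrt (by positivity)]
      push_cast
      ring
    rw [h1, ← pow_mul]
    apply pow_le_pow_right₀ (Real.one_le_sqrt.mpr hn1)
    omega
  have hfm : (4 * (n:ℝ) ^ 2 / r) * (((m + 1 : ℕ):ℝ) ^ 2 * r ^ (m + 1)) =
      4 * (n:ℝ) ^ 2 * ((m + 1 : ℕ):ℝ) ^ 2 * r ^ m := by
    field_simp
    ring
  have hfm_lt : 4 * (n:ℝ) ^ 2 * ((m + 1 : ℕ):ℝ) ^ 2 * r ^ m < ε := by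
    rw [← hfm]
    exact hM₀ m (by omega)
  -- the key bound : bad count < ε * N * N^(n-1)
  have hkey : ((2 * n ^ 2) * (2 * (N ^ (n - 1) * PB)) : ℝ) < ε * ((N:ℝ) ^ (n - 1) * N) := by
    have hb1 : ((2 * n ^ 2 : ℕ) : ℝ) * (2 * (((N:ℝ) ^ (n - 1)) * (PB:ℝ))) =
        (4 * (n:ℝ) ^ 2 * (PB:ℝ)) * (N:ℝ) ^ (n - 1) := by
      push_cast
      ring
    have hPBr : (PB:ℝ) ≤ ((m + 1 : ℕ):ℝ) ^ 2 * Real.sqrt (2 * n) ^ m := by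
      calc (PB:ℝ) ≤ (((m + 1) ^ 2 * (2 * n) ^ (m / 2) : ℕ):ℝ) := by exact_mod_cast hPB
        _ = ((m + 1 : ℕ):ℝ) ^ 2 * ((2 * n : ℕ):ℝ) ^ (m / 2) := by push_cast; ring
        _ ≤ ((m + 1 : ℕ):ℝ) ^ 2 * Real.sqrt (2 * n) ^ m := by
            apply mul_le_mul_of_nonneg_left h2n_half (by positivity)
    have hsqrt_r : Real.sqrt (2 * n) ^ m = r ^ m * (2 * (n:ℝ) - 1) ^ m := by
      rw [hr_def, div_pow]
      field_simp
    have hchain : 4 * (n:ℝ) ^ 2 * (PB:ℝ) < ε * (N:ℝ) := by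
      calc 4 * (n:ℝ) ^ 2 * (PB:ℝ)
          ≤ 4 * (n:ℝ) ^ 2 * (((m + 1 : ℕ):ℝ) ^ 2 * Real.sqrt (2 * n) ^ m) := by
            apply mul_le_mul_of_nonneg_left hPBr (by positivity)
        _ = (4 * (n:ℝ) ^ 2 * ((m + 1 : ℕ):ℝ) ^ 2 * r ^ m) * (2 * (n:ℝ) - 1) ^ m := by
            rw [hsqrt_r]; ring
        _ ≤ (4 * (n:ℝ) ^ 2 * ((m + 1 : ℕ):ℝ) ^ 2 * r ^ m) * (N:ℝ) := by
            apply mul_le_mul_of_nonneg_left hDm_le_N (by positivity)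
        _ < ε * (N:ℝ) := by
            apply mul_lt_mul_of_pos_right hfm_lt (by exact_mod_cast hNpos)
    calc ((2 * n ^ 2) * (2 * (N ^ (n - 1) * PB)) : ℝ)
        = (4 * (n:ℝ) ^ 2 * (PB:ℝ)) * (N:ℝ) ^ (n - 1) := by push_cast; ring
      _ < (ε * (N:ℝ)) * (N:ℝ) ^ (n - 1) := by
          apply mul_lt_mul_of_pos_right hchain (by positivity)
      _ = ε * ((N:ℝ) ^ (n - 1) * N) := by ring
  -- conclude
  have hNn : (N:ℝ) ^ (n - 1) * N = (N:ℝ) ^ n := by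
    rw [← pow_succ]
    congr 1
    omega
  have hTup : ((Tup n m).card : ℝ) = (N:ℝ) ^ n := by
    rw [card_Tup]
    push_cast
    rfl
  rw [hTup]
  rw [lt_div_iff₀ (by positivity)]
  have hGreal : (N:ℝ) ^ n ≤ (G:ℝ) + ((2 * n ^ 2) * (2 * (N ^ (n - 1) * PB)) : ℝ) := by
    have := hmaster
    push_cast
    exact_mod_cast this
  nlinarith [hkey, hGreal, hNn]
end

section
/- Let G be a finitely generated free group with basis g₁, …, g_n and let H be a finitely generated free group of rank greater than 1. For any natural number l ≥ 1, the set of homomorphisms φ : G → H with remnant length l (i.e., with remnant and |Rem_φ(g_i)| ≥ l for every i) is generic: identifying each homomorphism with the n-tuple (φ(g₁), …, φ(g_n)) ∈ Hⁿ, the asymptotic density of this set equals 1. -/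
/-! Basic definitions: cancellation in products of reduced words, remnant
of a homomorphism of free groups, and assorted constructions. -/

open FreeGroup

/-- A set `S` of tuples `ι → H`, where `H` is the free group on `Fin k`, is generic if
its asymptotic density is `1`:  the proportion of tuples all of whose entries have reduced
word length at most `p` that lie in `S` tends to `1` as `p → ∞`. -/
def IsGeneric {k : ℕ} {ι : Type*} [Fintype ι] (S : Set (ι → FreeGroup (Fin k))) : Prop :=
  Filter.Tendsto
    (fun p : ℕ => (Set.ncard {t | t ∈ S ∧ ∀ i, (t i).norm ≤ p} : ℝ) /
      (Set.ncard {x : FreeGroup (Fin k) | FreeGroup.norm x ≤ p} : ℝ) ^ (Fintype.card ι))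
    Filter.atTop (nhds 1)


/-! ### Auxiliary development for the proof -/

set_option linter.unusedSectionVars false
set_option linter.unusedVariables false

open List

variable {β : Type*} [DecidableEq β]
variable {β : Type*} [DecidableEq β]

/-- A word is reduced: no adjacent cancelling pair. -/
def IsRed (L : List (β × Bool)) : Prop := List.Chain' (fun x y => y ≠ (x.1, !x.2)) L

lemma isRed_nil : IsRed ([] : List (β × Bool)) := List.isChain_nil

lemma IsRed.tail {x : β × Bool} {L : List (β × Bool)} (h : IsRed (x :: L)) : IsRed L :=
  (List.isChain_cons.1 h).2

lemma isRed_reduce (L : List (β × Bool)) : IsRed (reduce L) := by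
  induction L with
  | nil => exact isRed_nil
  | cons x L ih =>
    rw [reduce.cons]
    rcases h : reduce L with _ | ⟨hd, tl⟩
    · exact List.isChain_singleton x
    · rw [h] at ih
      by_cases hc : x.1 = hd.1 ∧ x.2 = !hd.2
      · simpa [hc] using ih.tail
      · simp only [if_neg hc]
        refine List.isChain_cons_cons.2 ⟨?_, ih⟩
        rintro rfl
        exact hc ⟨rfl, by simp⟩

lemma IsRed.reduce_eq {L : List (β × Bool)} (h : IsRed L) : reduce L = L := by
  induction L with
  | nil => rfl
  | cons x L ih =>
    rw [reduce.cons, ih h.tail]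
    cases L with
    | nil => rfl
    | cons hd tl =>
      have hx : hd ≠ (x.1, !x.2) := (List.isChain_cons_cons.1 h).1
      have hc : ¬(x.1 = hd.1 ∧ x.2 = !hd.2) := by
        rintro ⟨h1, h2⟩
        exact hx (Prod.ext h1.symm (by simp [h2]))
      simp [hc]

lemma IsRed.toWord_mk' {L : List (β × Bool)} (h : IsRed L) : (mk L).toWord = L := by
  rw [FreeGroup.toWord_mk, h.reduce_eq]

lemma IsRed.norm_mk {L : List (β × Bool)} (h : IsRed L) : norm (mk L) = L.length := by
  unfold FreeGroup.norm
  rw [h.toWord_mk']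

lemma isRed_toWord (x : FreeGroup β) : IsRed x.toWord := by
  rw [← reduce_toWord]; exact isRed_reduce _

lemma norm_le_norm_mul_add (x y : FreeGroup β) : norm x ≤ norm (x * y) + norm y := by
  calc norm x = norm (x * y * y⁻¹) := by group
    _ ≤ norm (x * y) + norm y⁻¹ := norm_mul_le _ _
    _ = norm (x * y) + norm y := by rw [norm_inv_eq]

lemma junction {L M : List (β × Bool)} (hL : IsRed L) (hM : IsRed M) :
    norm (mk L * mk M) = L.length + M.length ∨
    ∃ L₀ x M₀, L = L₀ ++ [x] ∧ M = (x.1, !x.2) :: M₀ ∧ mk L * mk M = mk L₀ * mk M₀ := by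
  by_cases h : IsRed (L ++ M)
  · left
    rw [mul_mk, h.norm_mk, List.length_append]
  · right
    rcases List.eq_nil_or_concat' L with rfl | ⟨L₀, x, rfl⟩
    · exact absurd (by simpa using hM) h
    cases M with
    | nil => exact absurd (by simpa using hL) h
    | cons y M₀ =>
      have hxy : y = (x.1, !x.2) := by
        by_contra hne
        apply h
        refine (List.isChain_append).2 ⟨hL, hM, ?_⟩
        intro a ha b hb
        rw [List.getLast?_concat] at ha
        simp only [List.head?_cons, Option.mem_def, Option.some.injEq] at ha hb
        subst ha; subst hb; exact hne
      subst hxy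
      refine ⟨L₀, x, M₀, rfl, rfl, ?_⟩
      rw [mul_mk, mul_mk]
      apply reduce.exact
      apply reduce.Step.eq
      have : (L₀ ++ [x]) ++ (x.1, !x.2) :: M₀ = L₀ ++ (x.1, x.2) :: (x.1, !x.2) :: M₀ := by
        simp
      rw [this]
      exact Red.Step.not

lemma IsRed.prefix {L L' : List (β × Bool)} (h : IsRed L) (h' : L' <+: L) : IsRed L' :=
  List.IsChain.prefix h h'

lemma IsRed.infix {L L' : List (β × Bool)} (h : IsRed L) (h' : L' <:+: L) : IsRed L' :=
  List.IsChain.infix h h'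

lemma key_len {L M : List (β × Bool)} {m : ℕ} (hL : IsRed L) (hM : IsRed M)
    (h : norm (mk L * mk M) + 2 * m ≤ L.length + M.length) :
    m ≤ L.length ∧ m ≤ M.length := by
  constructor
  · have h1 : M.length ≤ norm (mk L * mk M) + L.length := by
      calc M.length = norm (mk M) := hM.norm_mk.symm
        _ = norm ((mk L)⁻¹ * (mk L * mk M)) := by group
        _ ≤ norm (mk L)⁻¹ + norm (mk L * mk M) := norm_mul_le _ _
        _ = norm (mk L * mk M) + L.length := by rw [norm_inv_eq, hL.norm_mk]; ring
    omega
  · have h1 : L.length ≤ norm (mk L * mk M) + M.length := by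
      calc L.length = norm (mk L) := hL.norm_mk.symm
        _ ≤ norm (mk L * mk M) + norm (mk M) := norm_le_norm_mul_add _ _
        _ = norm (mk L * mk M) + M.length := by rw [hM.norm_mk]
    omega

lemma key_cancel : ∀ (m : ℕ) (L M : List (β × Bool)), IsRed L → IsRed M →
    norm (mk L * mk M) + 2 * m ≤ L.length + M.length →
    M.take m = invRev (L.drop (L.length - m)) := by
  intro m
  induction m with
  | zero => intro L M _ _ _; simp [invRev]
  | succ m ih =>
    intro L M hL hM h
    rcases junction hL hM with heq | ⟨L₀, x, M₀, rfl, rfl, hprod⟩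
    · omega
    · have hlenL : (L₀ ++ [x]).length = L₀.length + 1 := by simp
      have hlenM : ((x.1, !x.2) :: M₀).length = M₀.length + 1 := by simp
      have h' : norm (mk L₀ * mk M₀) + 2 * m ≤ L₀.length + M₀.length := by
        rw [← hprod]; omega
      have hL₀ : IsRed L₀ := hL.prefix ⟨[x], rfl⟩
      have hM₀ : IsRed M₀ := hM.tail
      have hml : m ≤ L₀.length := (key_len hL₀ hM₀ h').1
      have := ih L₀ M₀ hL₀ hM₀ h'
      rw [hlenL]
      have harith : L₀.length + 1 - (m + 1) = L₀.length - m := by omega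
      rw [harith]
      have hdrop : (L₀ ++ [x]).drop (L₀.length - m) = L₀.drop (L₀.length - m) ++ [x] := by
        rw [List.drop_append_of_le_length (by omega)]
      rw [hdrop]
      have hinv : invRev (L₀.drop (L₀.length - m) ++ [x]) =
          (x.1, !x.2) :: invRev (L₀.drop (L₀.length - m)) := by
        simp [invRev]
      rw [hinv, List.take_cons (by omega), ← this]
      simp

lemma norm_def (x : FreeGroup β) : norm x = x.toWord.length := rfl

lemma cancel_ineq {a b : FreeGroup β} {m : ℕ} (h : m ≤ cancel a b) :
    norm (a * b) + 2 * m ≤ norm a + norm b := by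
  have h2 := norm_mul_le a b
  unfold cancel at h
  omega

lemma cancel_norm_le {a b : FreeGroup β} {m : ℕ} (h : m ≤ cancel a b) :
    m ≤ norm a ∧ m ≤ norm b := by
  have h1 := cancel_ineq h
  have := key_len (L := a.toWord) (M := b.toWord) (m := m)
    (isRed_toWord a) (isRed_toWord b)
    (by rw [mk_toWord, mk_toWord, ← norm_def, ← norm_def]; exact h1)
  rwa [← norm_def, ← norm_def] at this

lemma cancel_take {a b : FreeGroup β} {m : ℕ} (h : m ≤ cancel a b) :
    b.toWord.take m = invRev (a.toWord.drop (norm a - m)) := by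
  have h1 := cancel_ineq h
  have := key_cancel m a.toWord b.toWord (isRed_toWord a) (isRed_toWord b)
    (by rw [mk_toWord, mk_toWord, ← norm_def, ← norm_def]; exact h1)
  rwa [← norm_def] at this

/-- Decomposition: if `m` letters cancel in `a*b` then `a = a'u`, `b = u⁻¹b'` with
`|u| = m`, `|a'| = |a| - m`, `|b'| = |b| - m`. -/
lemma exists_decomp {a b : FreeGroup β} {m : ℕ} (h : m ≤ cancel a b) :
    ∃ u a' b' : FreeGroup β, a = a' * u ∧ b = u⁻¹ * b' ∧
      norm u = m ∧ norm a' = norm a - m ∧ norm b' = norm b - m := by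
  obtain ⟨hma, hmb⟩ := cancel_norm_le h
  set q := norm a - m with hq
  have hlenL : a.toWord.length = norm a := rfl
  have hu_red : IsRed (a.toWord.drop q) := List.IsChain.drop (isRed_toWord a) q
  have ha'_red : IsRed (a.toWord.take q) := List.IsChain.take (isRed_toWord a) q
  have hb'_red : IsRed (b.toWord.drop m) := List.IsChain.drop (isRed_toWord b) m
  refine ⟨mk (a.toWord.drop q), mk (a.toWord.take q), mk (b.toWord.drop m), ?_, ?_, ?_, ?_, ?_⟩
  · rw [mul_mk, List.take_append_drop, mk_toWord]
  · rw [inv_mk, ← cancel_take h, mul_mk, List.take_append_drop, mk_toWord]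
  · rw [hu_red.norm_mk, List.length_drop, hlenL]; omega
  · rw [ha'_red.norm_mk, List.length_take, hlenL]; omega
  · rw [hb'_red.norm_mk, List.length_drop, ← norm_def]

/-- Diagonal decomposition: if `m` letters cancel in `a*a` and `2m ≤ |a|`, then
`a = u c u⁻¹` with `|u| = m`, `|c| = |a| - 2m`. -/
lemma exists_decomp_diag {a : FreeGroup β} {m : ℕ} (h : m ≤ cancel a a)
    (h2 : 2 * m ≤ norm a) :
    ∃ u c : FreeGroup β, a = u * c * u⁻¹ ∧ norm u = m ∧ norm c = norm a - 2 * m := by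
  have hma : m ≤ norm a := (cancel_norm_le h).1
  set L := a.toWord with hL
  have hlen : L.length = norm a := rfl
  have hkey : L.take m = invRev (L.drop (norm a - m)) := cancel_take h
  have hsplit : L = L.take m ++ (L.drop m).take (norm a - 2 * m) ++ L.drop (norm a - m) := by
    have e1 : (L.drop m).drop (norm a - 2 * m) = L.drop (norm a - m) := by
      rw [List.drop_drop]
      congr 1
      omega
    conv_lhs => rw [← List.take_append_drop m L]
    rw [List.append_assoc]
    congr 1
    conv_lhs => rw [← List.take_append_drop (norm a - 2 * m) (L.drop m)]
    rw [e1]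
  have hmid_red : IsRed ((L.drop m).take (norm a - 2 * m)) :=
    List.IsChain.take (List.IsChain.drop (isRed_toWord a) m) _
  have hu_red : IsRed (L.take m) := List.IsChain.take (isRed_toWord a) m
  refine ⟨mk (L.take m), mk ((L.drop m).take (norm a - 2 * m)), ?_, ?_, ?_⟩
  · have hsuf : mk (L.drop (norm a - m)) = (mk (L.take m))⁻¹ := by
      rw [inv_mk]
      congr 1
      rw [hkey, invRev_invRev]
    calc a = mk L := mk_toWord.symm
      _ = mk (L.take m ++ (L.drop m).take (norm a - 2 * m) ++ L.drop (norm a - m)) := by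
          conv_lhs => rw [hsplit]
      _ = mk (L.take m) * mk ((L.drop m).take (norm a - 2 * m)) * mk (L.drop (norm a - m)) := by
          rw [mul_mk, mul_mk]
      _ = mk (L.take m) * mk ((L.drop m).take (norm a - 2 * m)) * (mk (L.take m))⁻¹ := by
          rw [hsuf]
  · rw [hu_red.norm_mk, List.length_take, hlen]; omega
  · rw [hmid_red.norm_mk, List.length_take, List.length_drop, hlen]; omega

section Counting

variable (β : Type*) [Fintype β] [DecidableEq β]

/-- The finset of reduced words of length `m` over alphabet `β × Bool`. -/
def Rfin : ℕ → Finset (List (β × Bool))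
  | 0 => {[]}
  | m + 1 => (Rfin m).biUnion fun L =>
      ((Finset.univ : Finset (β × Bool)).filter
        fun y => ∀ x ∈ L.getLast?, y ≠ (x.1, !x.2)).image fun y => L ++ [y]

variable {β}

lemma mem_Rfin {m : ℕ} {L : List (β × Bool)} :
    L ∈ Rfin β m ↔ IsRed L ∧ L.length = m := by
  induction m generalizing L with
  | zero =>
    simp only [Rfin, Finset.mem_singleton, List.length_eq_zero_iff]
    constructor
    · rintro rfl; exact ⟨isRed_nil, rfl⟩
    · rintro ⟨-, rfl⟩; rfl
  | succ m ih =>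
    simp only [Rfin, Finset.mem_biUnion, Finset.mem_image, Finset.mem_filter, Finset.mem_univ,
      true_and]
    constructor
    · rintro ⟨L', hL', y, hy, rfl⟩
      obtain ⟨hred, hlen⟩ := ih.1 hL'
      constructor
      · refine List.isChain_append.2 ⟨hred, List.isChain_singleton y, ?_⟩
        intro x hx z hz
        simp only [List.head?_cons, Option.mem_def, Option.some.injEq] at hz
        subst hz
        exact hy x hx
      · simp [hlen]
    · rintro ⟨hred, hlen⟩
      rcases List.eq_nil_or_concat' L with rfl | ⟨L₀, y, rfl⟩
      · simp at hlen
      refine ⟨L₀, ih.2 ⟨hred.prefix ⟨[y], rfl⟩, by simpa using hlen⟩, y, ?_, rfl⟩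
      intro x hx
      have := (List.isChain_append.1 hred).2.2 x hx y (by simp)
      exact this

lemma card_Rfin_zero : (Rfin β 0).card = 1 := rfl

lemma card_Rfin_one : (Rfin β 1).card = Fintype.card β * 2 := by
  have : Rfin β 1 = Finset.univ.image (fun y : β × Bool => [y]) := by
    ext L
    simp only [mem_Rfin, List.length_eq_one_iff, Finset.mem_image, Finset.mem_univ, true_and]
    constructor
    · rintro ⟨-, a, rfl⟩; exact ⟨a, rfl⟩
    · rintro ⟨a, rfl⟩; exact ⟨List.isChain_singleton a, a, rfl⟩
  rw [this, Finset.card_image_of_injective _ (fun a b h => by simpa using h)]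
  simp [Fintype.card_prod, mul_comm]

lemma card_Rfin_succ {m : ℕ} (hm : 1 ≤ m) :
    (Rfin β (m + 1)).card = (Fintype.card β * 2 - 1) * (Rfin β m).card := by
  classical
  rw [show Rfin β (m+1) = (Rfin β m).biUnion fun L =>
      ((Finset.univ : Finset (β × Bool)).filter
        fun y => ∀ x ∈ L.getLast?, y ≠ (x.1, !x.2)).image fun y => L ++ [y] from rfl]
  rw [Finset.card_biUnion]
  · have hcards : ∀ L ∈ Rfin β m,
        (((Finset.univ : Finset (β × Bool)).filter
          fun y => ∀ x ∈ L.getLast?, y ≠ (x.1, !x.2)).image fun y => L ++ [y]).card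
        = Fintype.card β * 2 - 1 := by
      intro L hL
      obtain ⟨hred, hlen⟩ := mem_Rfin.1 hL
      have hne : L ≠ [] := by intro h; subst h; simp at hlen; omega
      rw [Finset.card_image_of_injective _ (fun a b h => by simpa using h)]
      have : (Finset.univ : Finset (β × Bool)).filter
          (fun y => ∀ x ∈ L.getLast?, y ≠ (x.1, !x.2)) =
          Finset.univ.erase ((L.getLast hne).1, !(L.getLast hne).2) := by
        ext y
        simp only [Finset.mem_filter, Finset.mem_univ, true_and, Finset.mem_erase,
          List.getLast?_eq_getLast hne, Option.mem_def, Option.some.injEq]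
        constructor
        · intro h; exact ⟨h _ rfl, trivial⟩
        · rintro ⟨h, -⟩ x hx; subst hx; exact h
      rw [this, Finset.card_erase_of_mem (Finset.mem_univ _)]
      simp [Fintype.card_prod, mul_comm]
    rw [Finset.sum_congr rfl hcards, Finset.sum_const, smul_eq_mul, mul_comm]
  · intro L₁ h₁ L₂ h₂ hne
    simp only [Finset.disjoint_left, Finset.mem_image, Finset.mem_filter]
    rintro x ⟨y₁, -, rfl⟩ ⟨y₂, -, heq⟩
    obtain ⟨-, hl₁⟩ := mem_Rfin.1 h₁
    obtain ⟨-, hl₂⟩ := mem_Rfin.1 h₂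
    exact hne (List.append_inj_left' heq.symm rfl)

lemma card_Rfin_formula {m : ℕ} (hm : 1 ≤ m) :
    (Rfin β m).card = (Fintype.card β * 2) * (Fintype.card β * 2 - 1) ^ (m - 1) := by
  induction m with
  | zero => omega
  | succ m ih =>
    rcases Nat.eq_or_lt_of_le hm with h | h
    · have hm0 : m = 0 := by omega
      subst hm0
      simpa using card_Rfin_one
    · have hm1 : 1 ≤ m := by omega
      rw [card_Rfin_succ hm1, ih hm1]
      have : m + 1 - 1 = (m - 1) + 1 := by omega
      rw [this, pow_succ]
      ring

end Counting

section Ball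

variable (β : Type*) [Fintype β] [DecidableEq β]

/-- The finset of reduced words of length at most `p`. -/
def Bfin (p : ℕ) : Finset (List (β × Bool)) := (Finset.range (p + 1)).biUnion (Rfin β)

variable {β}

lemma mem_Bfin {p : ℕ} {L : List (β × Bool)} :
    L ∈ Bfin β p ↔ IsRed L ∧ L.length ≤ p := by
  simp only [Bfin, Finset.mem_biUnion, Finset.mem_range, mem_Rfin]
  constructor
  · rintro ⟨m, hm, hred, rfl⟩; exact ⟨hred, by omega⟩
  · rintro ⟨hred, hlen⟩; exact ⟨L.length, by omega, hred, rfl⟩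

lemma card_Bfin_succ (p : ℕ) :
    (Bfin β (p + 1)).card = (Bfin β p).card + (Rfin β (p + 1)).card := by
  rw [← Finset.card_union_of_disjoint]
  · congr 1
    ext L
    simp only [Finset.mem_union, mem_Bfin, mem_Rfin]
    constructor
    · rintro ⟨hred, hlen⟩
      rcases Nat.lt_or_ge L.length (p + 1) with h | h
      · exact Or.inl ⟨hred, by omega⟩
      · exact Or.inr ⟨hred, by omega⟩
    · rintro (⟨hred, hlen⟩ | ⟨hred, hlen⟩) <;> exact ⟨hred, by omega⟩
  · simp only [Finset.disjoint_left, mem_Bfin, mem_Rfin]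
    rintro L ⟨-, hlen⟩ ⟨-, h2⟩
    omega

lemma card_Bfin_zero : (Bfin β 0).card = 1 := rfl

lemma card_Bfin_le (hβ : 2 ≤ Fintype.card β) (p : ℕ) :
    (Bfin β p).card ≤ 3 * (Fintype.card β * 2 - 1) ^ p := by
  induction p with
  | zero => simp [card_Bfin_zero]
  | succ p ih =>
    rw [card_Bfin_succ, card_Rfin_formula (by omega)]
    have h1 : (Fintype.card β * 2) * (Fintype.card β * 2 - 1) ^ (p + 1 - 1)
        ≤ (Fintype.card β * 2) * (Fintype.card β * 2 - 1) ^ p := by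
      simp
    have h3 : 3 * (Fintype.card β * 2 - 1) ^ p + (Fintype.card β * 2) *
        (Fintype.card β * 2 - 1) ^ p ≤ 3 * (Fintype.card β * 2 - 1) ^ (p + 1) := by
      rw [pow_succ]
      have : 3 + Fintype.card β * 2 ≤ 3 * (Fintype.card β * 2 - 1) := by omega
      calc 3 * (Fintype.card β * 2 - 1) ^ p + (Fintype.card β * 2) *
            (Fintype.card β * 2 - 1) ^ p
          = (3 + Fintype.card β * 2) * (Fintype.card β * 2 - 1) ^ p := by ring
        _ ≤ (3 * (Fintype.card β * 2 - 1)) * (Fintype.card β * 2 - 1) ^ p :=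
            Nat.mul_le_mul_right _ this
        _ = 3 * ((Fintype.card β * 2 - 1) ^ p * (Fintype.card β * 2 - 1)) := by ring
    omega

lemma le_card_Bfin (hβ : 2 ≤ Fintype.card β) (p : ℕ) :
    (Fintype.card β * 2 - 1) ^ p ≤ (Bfin β p).card := by
  cases p with
  | zero => simp [card_Bfin_zero]
  | succ p =>
    have hsub : Rfin β (p + 1) ⊆ Bfin β (p + 1) := by
      intro L hL
      rw [mem_Bfin]
      obtain ⟨h1, h2⟩ := mem_Rfin.1 hL
      exact ⟨h1, by omega⟩
    calc (Fintype.card β * 2 - 1) ^ (p + 1)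
        = (Fintype.card β * 2 - 1) * (Fintype.card β * 2 - 1) ^ p := by rw [pow_succ]; ring
      _ ≤ (Fintype.card β * 2) * (Fintype.card β * 2 - 1) ^ (p + 1 - 1) := by
          simp only [Nat.add_sub_cancel]
          exact Nat.mul_le_mul_right _ (by omega)
      _ = (Rfin β (p + 1)).card := (card_Rfin_formula (by omega)).symm
      _ ≤ (Bfin β (p + 1)).card := Finset.card_le_card hsub

/-- The ball in the free group. -/
def ball (β : Type*) [DecidableEq β] (p : ℕ) : Set (FreeGroup β) := {x | norm x ≤ p}

lemma ball_finite (p : ℕ) : (ball β p).Finite := by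
  have : ball β p = toWord ⁻¹' {L : List (β × Bool) | L.length ≤ p} := rfl
  rw [this]
  exact (List.finite_length_le _ p).preimage toWord_injective.injOn

lemma ncard_ball (p : ℕ) : (ball β p).ncard = (Bfin β p).card := by
  have himg : toWord '' (ball β p) = ↑(Bfin β p) := by
    ext L
    simp only [Set.mem_image, Finset.coe_sort_coe, Finset.mem_coe, mem_Bfin]
    constructor
    · rintro ⟨x, hx, rfl⟩
      exact ⟨isRed_toWord x, hx⟩
    · rintro ⟨hred, hlen⟩
      exact ⟨mk L, by simpa [ball, hred.norm_mk] using hlen, hred.toWord_mk'⟩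
  rw [← Set.ncard_image_of_injOn toWord_injective.injOn, himg, Set.ncard_coe_finset]

end Ball

section NcardTools

lemma ncard_sprod {A B : Type*} (s : Set A) (t : Set B) :
    (s ×ˢ t).ncard = s.ncard * t.ncard := by
  rw [← Nat.card_coe_set_eq, ← Nat.card_coe_set_eq, ← Nat.card_coe_set_eq, ← Nat.card_prod]
  exact Nat.card_congr (Equiv.Set.prod s t)

lemma ncard_univ_pi {ι : Type*} [Fintype ι] {A : ι → Type*} (s : ∀ i, Set (A i)) :
    (Set.univ.pi s).ncard = ∏ i, (s i).ncard := by
  rw [← Nat.card_coe_set_eq]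
  have := Nat.card_congr (Equiv.Set.univPi s)
  rw [this, Nat.card_pi]
  simp [Nat.card_coe_set_eq]

lemma ncard_finset_biUnion_le {ι A : Type*} [DecidableEq ι] (s : Finset ι) (f : ι → Set A) :
    (⋃ i ∈ s, f i).ncard ≤ ∑ i ∈ s, (f i).ncard := by
  induction s using Finset.induction with
  | empty => simp
  | @insert a s ha ih =>
    rw [Finset.set_biUnion_insert, Finset.sum_insert ha]
    exact le_trans (Set.ncard_union_le _ _) (Nat.add_le_add_left ih _)

lemma ncard_iUnion_le {ι : Type*} [Fintype ι] {A : Type*} (f : ι → Set A) :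
    (⋃ i, f i).ncard ≤ ∑ i, (f i).ncard := by
  classical
  have := ncard_finset_biUnion_le (Finset.univ : Finset ι) f
  simpa using this

end NcardTools

section Events

variable {β : Type*} [Fintype β] [DecidableEq β] {n : ℕ}

lemma norm_bpow (w : FreeGroup β) (e : Bool) : norm (bpow w e) = norm w := by
  cases e <;> simp [bpow, norm_inv_eq]

lemma bpow_bpow (w : FreeGroup β) (e : Bool) : bpow (bpow w e) e = w := by
  cases e <;> simp [bpow]

/-- The tuple ball. -/
def tball (β : Type*) [DecidableEq β] (n p : ℕ) : Set (Fin n → FreeGroup β) :=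
  Set.univ.pi fun _ => ball β p

lemma tball_eq (p : ℕ) : tball β n p = {t : Fin n → FreeGroup β | ∀ i, norm (t i) ≤ p} := by
  ext t; simp [tball, ball]

lemma tball_finite (p : ℕ) : (tball β n p).Finite :=
  Set.Finite.pi fun _ => ball_finite p

lemma ncard_tball (p : ℕ) : (tball β n p).ncard = (Bfin β p).card ^ n := by
  rw [tball, ncard_univ_pi]
  simp [ncard_ball]

/-- Helper: pi set with one small coordinate. -/
lemma ncard_pi_single (i : Fin n) (s t : Set (FreeGroup β)) :
    (Set.univ.pi fun j => if j = i then s else t).ncard = s.ncard * t.ncard ^ (n - 1) := by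
  rw [ncard_univ_pi]
  rw [← Finset.mul_prod_erase Finset.univ _ (Finset.mem_univ i)]
  simp only [if_pos rfl]
  congr 1
  rw [Finset.prod_congr rfl (fun j hj => by
    rw [if_neg (Finset.ne_of_mem_erase hj)]), Finset.prod_const,
    Finset.card_erase_of_mem (Finset.mem_univ i), Finset.card_univ, Fintype.card_fin]

/-- Helper: pi set with two singleton coordinates. -/
lemma ncard_pi_double (a b : Fin n) (hab : a ≠ b) (t : Set (FreeGroup β)) :
    (Set.univ.pi fun j => if j = a then {1} else if j = b then {1} else t).ncard
      = t.ncard ^ (n - 2) := by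
  rw [ncard_univ_pi]
  have hpt : ∀ j, ((if j = a then ({1} : Set (FreeGroup β)) else if j = b then {1}
      else t)).ncard = if j = a then 1 else if j = b then 1 else t.ncard := by
    intro j; split_ifs <;> simp
  simp only [hpt]
  rw [← Finset.mul_prod_erase Finset.univ _ (Finset.mem_univ a), if_pos rfl, one_mul]
  rw [← Finset.mul_prod_erase _ _ (Finset.mem_erase.2 ⟨hab.symm, Finset.mem_univ b⟩),
    if_neg hab.symm, if_pos rfl, one_mul]
  rw [Finset.prod_congr rfl (fun j hj => by
    have h1 := Finset.ne_of_mem_erase hj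
    have h2 := Finset.ne_of_mem_erase (Finset.mem_of_mem_erase hj)
    rw [if_neg h2, if_neg h1]), Finset.prod_const,
    Finset.card_erase_of_mem (Finset.mem_erase.2 ⟨hab.symm, Finset.mem_univ b⟩),
    Finset.card_erase_of_mem (Finset.mem_univ a), Finset.card_univ, Fintype.card_fin]
  congr 1

/-- Count of tuples with a small coordinate. -/
lemma badNorm_bound (p h : ℕ) (i : Fin n) :
    {t ∈ tball β n p | norm (t i) ≤ h}.ncard ≤
      (Bfin β h).card * (Bfin β p).card ^ (n - 1) := by
  have hsub : {t ∈ tball β n p | norm (t i) ≤ h} ⊆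
      Set.univ.pi fun j => if j = i then ball β h else ball β p := by
    rintro t ⟨ht, hi⟩
    intro j _
    by_cases hji : j = i
    · subst hji; simpa [if_pos rfl, ball] using hi
    · simp only [if_neg hji]
      exact ht j (Set.mem_univ j)
  calc {t ∈ tball β n p | norm (t i) ≤ h}.ncard
      ≤ (Set.univ.pi fun j => if j = i then ball β h else ball β p).ncard :=
        Set.ncard_le_ncard hsub (Set.Finite.pi fun j => by
          by_cases hji : j = i <;> simp [hji, ball_finite])
    _ = (ball β h).ncard * (ball β p).ncard ^ (n - 1) := ncard_pi_single i _ _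
    _ = (Bfin β h).card * (Bfin β p).card ^ (n - 1) := by rw [ncard_ball, ncard_ball]

/-- Count of tuples with large cancellation between two distinct coordinates. -/
lemma badCross_bound (p m : ℕ) (a b : Fin n) (e e' : Bool) :
    {t ∈ tball β n p | a ≠ b ∧ m + 1 ≤ cancel (bpow (t a) e) (bpow (t b) e')}.ncard ≤
      (Bfin β (m + 1)).card * ((Bfin β (p - (m + 1))).card * (Bfin β (p - (m + 1))).card)
        * (Bfin β p).card ^ (n - 2) := by
  by_cases hab : a = b
  · have : {t ∈ tball β n p | a ≠ b ∧ m + 1 ≤ cancel (bpow (t a) e) (bpow (t b) e')} = ∅ := by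
      ext t; simp [hab]
    rw [this]
    simp
  set S := {t ∈ tball β n p | a ≠ b ∧ m + 1 ≤ cancel (bpow (t a) e) (bpow (t b) e')} with hS
  set Tgt := (ball β (m+1) ×ˢ (ball β (p - (m+1)) ×ˢ ball β (p - (m+1)))) ×ˢ
    (Set.univ.pi fun j => if j = a then ({1} : Set (FreeGroup β)) else if j = b then {1}
      else ball β p) with hTgt
  -- the injection
  have key : ∀ t ∈ S, ∃ u x' y' : FreeGroup β,
      bpow (t a) e = x' * u ∧ bpow (t b) e' = u⁻¹ * y' ∧
      norm u = m + 1 ∧ norm x' ≤ p - (m+1) ∧ norm y' ≤ p - (m+1) := by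
    rintro t ⟨htb, -, hc⟩
    obtain ⟨u, x', y', h1, h2, h3, h4, h5⟩ := exists_decomp hc
    have hna : norm (t a) ≤ p := htb a (Set.mem_univ a)
    have hnb : norm (t b) ≤ p := htb b (Set.mem_univ b)
    refine ⟨u, x', y', h1, h2, h3, ?_, ?_⟩
    · rw [h4, norm_bpow]; omega
    · rw [h5, norm_bpow]; omega
  classical
  choose! u x' y' hxu hyu hnu hnx hny using key
  have hmap : ∀ t ∈ S, ((u t, (x' t, y' t)),
      Function.update (Function.update t a 1) b 1) ∈ Tgt := by
    intro t ht
    refine ⟨⟨by simpa [ball] using (hnu t ht).le, by simpa [ball] using hnx t ht,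
      by simpa [ball] using hny t ht⟩, ?_⟩
    intro j _
    by_cases hjb : j = b
    · subst hjb; simp [Function.update_self, if_neg (Ne.symm hab), hab]
    by_cases hja : j = a
    · subst hja
      simp [Function.update_of_ne hab, Function.update_self]
    · simp only [if_neg hja, if_neg hjb]
      rw [Function.update_of_ne hjb, Function.update_of_ne hja]
      exact ht.1 j (Set.mem_univ j)
  have hinj : Set.InjOn (fun t => ((u t, (x' t, y' t)),
      Function.update (Function.update t a 1) b 1)) S := by
    intro t1 h1 t2 h2 heq
    simp only [Prod.mk.injEq] at heq
    obtain ⟨⟨hu, hx, hy⟩, hrest⟩ := heq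
    funext j
    by_cases hja : j = a
    · subst hja
      have e1 : bpow (t1 j) e = x' t1 * u t1 := hxu t1 h1
      have e2 : bpow (t2 j) e = x' t2 * u t2 := hxu t2 h2
      have : bpow (t1 j) e = bpow (t2 j) e := by rw [e1, e2, hu, hx]
      have := congrArg (fun w => bpow w e) this
      simpa [bpow_bpow] using this
    by_cases hjb : j = b
    · subst hjb
      have e1 : bpow (t1 j) e' = (u t1)⁻¹ * y' t1 := hyu t1 h1
      have e2 : bpow (t2 j) e' = (u t2)⁻¹ * y' t2 := hyu t2 h2
      have : bpow (t1 j) e' = bpow (t2 j) e' := by rw [e1, e2, hu, hy]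
      have := congrArg (fun w => bpow w e') this
      simpa [bpow_bpow] using this
    · have := congrFun hrest j
      rwa [Function.update_of_ne hjb, Function.update_of_ne hja,
        Function.update_of_ne hjb, Function.update_of_ne hja] at this
  have hTgtFin : Tgt.Finite := by
    refine Set.Finite.prod (Set.Finite.prod (ball_finite _)
      (Set.Finite.prod (ball_finite _) (ball_finite _))) ?_
    refine Set.Finite.pi fun j => ?_
    by_cases hja : j = a
    · simp [hja]
    by_cases hjb : j = b
    · simp [hja, hjb]
    · simp [hja, hjb, ball_finite]
  calc S.ncard ≤ Tgt.ncard := Set.ncard_le_ncard_of_injOn _ hmap hinj hTgtFin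
    _ = (Bfin β (m + 1)).card * ((Bfin β (p - (m + 1))).card * (Bfin β (p - (m + 1))).card)
        * (Bfin β p).card ^ (n - 2) := by
      rw [hTgt, ncard_sprod, ncard_sprod, ncard_sprod, ncard_pi_double a b hab]
      simp only [ncard_ball]

/-- Count of tuples with large self-cancellation in a long coordinate. -/
lemma badDiag_bound (p m h : ℕ) (i : Fin n) (hmh : 2 * (m + 1) ≤ h) :
    {t ∈ tball β n p | h ≤ norm (t i) ∧ m + 1 ≤ cancel (t i) (t i)}.ncard ≤
      (Bfin β (m + 1)).card * (Bfin β (p - 2 * (m + 1))).card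
        * (Bfin β p).card ^ (n - 1) := by
  set S := {t ∈ tball β n p | h ≤ norm (t i) ∧ m + 1 ≤ cancel (t i) (t i)} with hS
  set Tgt := (ball β (m+1) ×ˢ ball β (p - 2 * (m+1))) ×ˢ
    (Set.univ.pi fun j => if j = i then ({1} : Set (FreeGroup β)) else ball β p) with hTgt
  have key : ∀ t ∈ S, ∃ u c : FreeGroup β, t i = u * c * u⁻¹ ∧
      norm u = m + 1 ∧ norm c ≤ p - 2 * (m + 1) := by
    rintro t ⟨htb, hni, hc⟩
    obtain ⟨u, c, h1, h2, h3⟩ := exists_decomp_diag hc (by omega)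
    have hn : norm (t i) ≤ p := htb i (Set.mem_univ i)
    exact ⟨u, c, h1, h2, by omega⟩
  classical
  choose! u c hdec hnu hnc using key
  have hmap : ∀ t ∈ S, ((u t, c t), Function.update t i 1) ∈ Tgt := by
    intro t ht
    refine ⟨⟨by simpa [ball] using (hnu t ht).le, by simpa [ball] using hnc t ht⟩, ?_⟩
    intro j _
    by_cases hji : j = i
    · subst hji; simp [Function.update_self]
    · simp only [if_neg hji]
      rw [Function.update_of_ne hji]
      exact ht.1 j (Set.mem_univ j)
  have hinj : Set.InjOn (fun t => ((u t, c t), Function.update t i 1)) S := by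
    intro t1 h1 t2 h2 heq
    simp only [Prod.mk.injEq] at heq
    obtain ⟨⟨hu, hc⟩, hrest⟩ := heq
    funext j
    by_cases hji : j = i
    · subst hji
      rw [hdec t1 h1, hdec t2 h2, hu, hc]
    · have := congrFun hrest j
      rwa [Function.update_of_ne hji, Function.update_of_ne hji] at this
  have hTgtFin : Tgt.Finite := by
    refine Set.Finite.prod (Set.Finite.prod (ball_finite _) (ball_finite _)) ?_
    refine Set.Finite.pi fun j => ?_
    by_cases hji : j = i
    · simp [hji]
    · simp [hji, ball_finite]
  calc S.ncard ≤ Tgt.ncard := Set.ncard_le_ncard_of_injOn _ hmap hinj hTgtFin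
    _ = (Bfin β (m + 1)).card * (Bfin β (p - 2 * (m + 1))).card
        * (Bfin β p).card ^ (n - 1) := by
      rw [hTgt, ncard_sprod, ncard_sprod, ncard_pi_single i]
      simp only [ncard_ball, Set.ncard_singleton, one_mul]

end Events

section Good

variable {β : Type*} [Fintype β] [DecidableEq β] {n : ℕ}

lemma bpow_true (w : FreeGroup β) : bpow w true = w := by simp [bpow]

lemma good_implies {p l : ℕ} (hp : 8 * l + 16 ≤ p) (t : Fin n → FreeGroup β)
    (hA : ∀ i, p / 2 < norm (t i))
    (hB : ∀ (a b : Fin n) (e e' : Bool), a ≠ b →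
      cancel (bpow (t a) e) (bpow (t b) e') ≤ p / 8)
    (hC : ∀ i, cancel (t i) (t i) ≤ p / 8) :
    HasRemnant (FreeGroup.lift t) ∧ ∀ i, l ≤ remnantLength (FreeGroup.lift t) i := by
  have hlift : ∀ j, (FreeGroup.lift t) (FreeGroup.of j) = t j := fun j => FreeGroup.lift_apply_of
  have hL : ∀ i, maxLeftCancel (FreeGroup.lift t) i ≤ p / 8 := by
    intro i
    apply Finset.sup_le
    intro je hje
    rw [Finset.mem_filter] at hje
    have hne := hje.2
    rw [hlift, hlift]
    by_cases hji : je.1 = i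
    · have he : je.2 = true := by
        cases hje2 : je.2
        · exact absurd (Prod.ext hji hje2) hne
        · rfl
      rw [hji, he, bpow_true]
      exact hC i
    · have := hB je.1 i je.2 true hji
      rwa [bpow_true] at this
  have hR : ∀ i, maxRightCancel (FreeGroup.lift t) i ≤ p / 8 := by
    intro i
    apply Finset.sup_le
    intro je hje
    rw [Finset.mem_filter] at hje
    have hne := hje.2
    rw [hlift, hlift]
    by_cases hji : je.1 = i
    · have he : je.2 = true := by
        cases hje2 : je.2
        · exact absurd (Prod.ext hji hje2) hne
        · rfl
      rw [hji, he, bpow_true]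
      exact hC i
    · have := hB i je.1 true je.2 (fun h => hji h.symm)
      rwa [bpow_true] at this
  constructor
  · intro i
    have := hA i
    have h1 := hL i
    have h2 := hR i
    rw [hlift] at *
    omega
  · intro i
    have := hA i
    have h1 := hL i
    have h2 := hR i
    unfold remnantLength
    rw [hlift]
    omega

end Good

section Master

variable {β : Type*} [Fintype β] [DecidableEq β] {n : ℕ}

lemma master (hβ : 2 ≤ Fintype.card β) (l p : ℕ) (hp : 8 * l + 16 ≤ p) :
    ∃ B : ℕ,
      (Bfin β p).card ^ n ≤
        {t : Fin n → FreeGroup β | (HasRemnant (FreeGroup.lift t) ∧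
          ∀ i, l ≤ remnantLength (FreeGroup.lift t) i) ∧ ∀ i, norm (t i) ≤ p}.ncard + B ∧
      B * (Fintype.card β * 2 - 1) ^ (p / 8 + 1) ≤
        (12 * n + 108 * (n * n)) * (Bfin β p).card ^ n := by
  set lam := Fintype.card β * 2 - 1 with hlam
  set N : ℕ → ℕ := fun q => (Bfin β q).card with hN
  have hlam3 : 3 ≤ lam := by omega
  have hlam1 : 1 ≤ lam := by omega
  have hNle : ∀ q, N q ≤ 3 * lam ^ q := fun q => card_Bfin_le hβ q
  have hNge : ∀ q, lam ^ q ≤ N q := fun q => le_card_Bfin hβ q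
  set m := p / 8 with hm
  set U1 := ⋃ i : Fin n, {t ∈ tball β n p | norm (t i) ≤ p / 2} with hU1
  set U2 := ⋃ q : (Fin n × Fin n) × Bool × Bool,
    {t ∈ tball β n p | q.1.1 ≠ q.1.2 ∧
      m + 1 ≤ cancel (bpow (t q.1.1) q.2.1) (bpow (t q.1.2) q.2.2)} with hU2
  set U3 := ⋃ i : Fin n, {t ∈ tball β n p | p / 2 + 1 ≤ norm (t i) ∧
    m + 1 ≤ cancel (t i) (t i)} with hU3
  set Bad := U1 ∪ U2 ∪ U3 with hBad
  refine ⟨Bad.ncard, ?_, ?_⟩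
  · -- N p ^ n ≤ Num + ncard Bad
    have hBadSub : Bad ⊆ tball β n p := by
      rintro t ((ht | ht) | ht) <;>
      · simp only [hU1, hU2, hU3, Set.mem_iUnion] at ht
        obtain ⟨q, hq, -⟩ := ht
        exact hq
    have hGood : tball β n p \ Bad ⊆
        {t : Fin n → FreeGroup β | (HasRemnant (FreeGroup.lift t) ∧
          ∀ i, l ≤ remnantLength (FreeGroup.lift t) i) ∧ ∀ i, norm (t i) ≤ p} := by
      rintro t ⟨htb, hbad⟩
      simp only [hBad, hU1, hU2, hU3, Set.mem_union, Set.mem_iUnion, not_or, not_exists,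
        Set.mem_setOf_eq, not_and, not_le, not_lt] at hbad
      obtain ⟨⟨h1, h2⟩, h3⟩ := hbad
      have hA : ∀ i, p / 2 < norm (t i) := fun i => h1 i htb
      have hB : ∀ (a b : Fin n) (e e' : Bool), a ≠ b →
          cancel (bpow (t a) e) (bpow (t b) e') ≤ m := by
        intro a b e e' hab
        have := h2 ((a, b), (e, e')) htb
        simp only [ne_eq] at this
        by_contra hc
        exact absurd (this hab) (by omega)
      have hC : ∀ i, cancel (t i) (t i) ≤ m := by
        intro i
        have := h3 i htb
        have hAi := hA i
        by_contra hc
        exact absurd (this (by omega)) (by omega)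
      refine ⟨good_implies hp t hA hB hC, ?_⟩
      rw [tball_eq] at htb
      exact htb
    have hfin : (tball β n p).Finite := tball_finite p
    calc N p ^ n = (tball β n p).ncard := (ncard_tball p).symm
      _ ≤ (tball β n p \ Bad).ncard + Bad.ncard :=
          Set.ncard_le_ncard_diff_add_ncard _ _ (hfin.subset hBadSub)
      _ ≤ {t : Fin n → FreeGroup β | (HasRemnant (FreeGroup.lift t) ∧
          ∀ i, l ≤ remnantLength (FreeGroup.lift t) i) ∧ ∀ i, norm (t i) ≤ p}.ncard
          + Bad.ncard := by
          refine Nat.add_le_add_right ?_ _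
          refine Set.ncard_le_ncard hGood ?_
          refine hfin.subset ?_
          rintro t ⟨-, ht⟩
          rw [tball_eq]
          exact ht
  · -- the power bound
    have hT1 : U1.ncard * lam ^ (m + 1) ≤ 3 * n * N p ^ n := by
      rcases Nat.eq_zero_or_pos n with rfl | hn
      · have : U1 = ∅ := Set.iUnion_of_empty _
        simp [this]
      have h1 : U1.ncard ≤ n * (N (p/2) * N p ^ (n-1)) := by
        calc U1.ncard ≤ ∑ i : Fin n, {t ∈ tball β n p | norm (t i) ≤ p / 2}.ncard :=
              ncard_iUnion_le _
          _ ≤ ∑ _i : Fin n, (N (p/2) * N p ^ (n-1)) :=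
              Finset.sum_le_sum fun i _ => badNorm_bound p (p/2) i
          _ = n * (N (p/2) * N p ^ (n-1)) := by simp [mul_comm]
      calc U1.ncard * lam ^ (m+1) ≤ n * (N (p/2) * N p ^ (n-1)) * lam ^ (m+1) := by gcongr
        _ ≤ n * ((3 * lam ^ (p/2)) * N p ^ (n-1)) * lam ^ (m+1) := by
            gcongr; exact hNle _
        _ = 3 * n * N p ^ (n-1) * lam ^ (p/2 + (m+1)) := by rw [pow_add]; ring
        _ ≤ 3 * n * N p ^ (n-1) * lam ^ p := by
            gcongr
            · omega
        _ ≤ 3 * n * N p ^ (n-1) * N p := by gcongr; exact hNge p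
        _ = 3 * n * N p ^ n := by
            rw [mul_assoc, ← pow_succ]
            congr 2
            omega
    have hT3 : U3.ncard * lam ^ (m + 1) ≤ 9 * n * N p ^ n := by
      rcases Nat.eq_zero_or_pos n with rfl | hn
      · have : U3 = ∅ := Set.iUnion_of_empty _
        simp [this]
      have h1 : U3.ncard ≤ n * (N (m+1) * N (p - 2*(m+1)) * N p ^ (n-1)) := by
        calc U3.ncard ≤ ∑ i : Fin n, {t ∈ tball β n p | p / 2 + 1 ≤ norm (t i) ∧
              m + 1 ≤ cancel (t i) (t i)}.ncard := ncard_iUnion_le _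
          _ ≤ ∑ _i : Fin n, (N (m+1) * N (p - 2*(m+1)) * N p ^ (n-1)) :=
              Finset.sum_le_sum fun i _ => badDiag_bound p m (p/2+1) i (by omega)
          _ = n * (N (m+1) * N (p - 2*(m+1)) * N p ^ (n-1)) := by simp [mul_comm]
      calc U3.ncard * lam ^ (m+1)
          ≤ n * (N (m+1) * N (p - 2*(m+1)) * N p ^ (n-1)) * lam ^ (m+1) := by gcongr
        _ ≤ n * ((3 * lam ^ (m+1)) * (3 * lam ^ (p - 2*(m+1))) * N p ^ (n-1))
            * lam ^ (m+1) := by gcongr <;> exact hNle _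
        _ = 9 * n * N p ^ (n-1) * lam ^ ((m+1) + (p - 2*(m+1)) + (m+1)) := by
            rw [pow_add, pow_add]; ring
        _ ≤ 9 * n * N p ^ (n-1) * lam ^ p := by
            gcongr
            · omega
        _ ≤ 9 * n * N p ^ (n-1) * N p := by gcongr; exact hNge p
        _ = 9 * n * N p ^ n := by
            rw [mul_assoc, ← pow_succ]
            congr 2
            omega
    have hT2 : U2.ncard * lam ^ (m + 1) ≤ 108 * (n * n) * N p ^ n := by
      rcases Nat.lt_or_ge n 2 with hn | hn
      · have : U2 = ∅ := by
          haveI : Subsingleton (Fin n) := by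
            interval_cases n
            · exact Fin.subsingleton_zero
            · exact Fin.subsingleton_one
          apply Set.eq_empty_iff_forall_notMem.2
          rintro t ht
          simp only [hU2, Set.mem_iUnion, Set.mem_setOf_eq] at ht
          obtain ⟨q, -, hne, -⟩ := ht
          exact hne (Subsingleton.elim _ _)
        simp [this]
      have h1 : U2.ncard ≤ (n * n * 4) * (N (m+1) * (N (p - (m+1)) * N (p - (m+1)))
          * N p ^ (n-2)) := by
        calc U2.ncard ≤ ∑ q : (Fin n × Fin n) × Bool × Bool,
              {t ∈ tball β n p | q.1.1 ≠ q.1.2 ∧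
                m + 1 ≤ cancel (bpow (t q.1.1) q.2.1) (bpow (t q.1.2) q.2.2)}.ncard :=
              ncard_iUnion_le _
          _ ≤ ∑ _q : (Fin n × Fin n) × Bool × Bool,
              (N (m+1) * (N (p - (m+1)) * N (p - (m+1))) * N p ^ (n-2)) :=
              Finset.sum_le_sum fun q _ => badCross_bound p m q.1.1 q.1.2 q.2.1 q.2.2
          _ = (n * n * 4) * (N (m+1) * (N (p - (m+1)) * N (p - (m+1))) * N p ^ (n-2)) := by
              simp [Finset.card_univ, mul_comm, mul_assoc, mul_left_comm]
      calc U2.ncard * lam ^ (m+1)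
          ≤ (n * n * 4) * (N (m+1) * (N (p - (m+1)) * N (p - (m+1))) * N p ^ (n-2))
            * lam ^ (m+1) := by gcongr
        _ ≤ (n * n * 4) * ((3 * lam ^ (m+1)) * ((3 * lam ^ (p - (m+1)))
            * (3 * lam ^ (p - (m+1)))) * N p ^ (n-2)) * lam ^ (m+1) := by
            gcongr <;> exact hNle _
        _ = 108 * (n * n) * N p ^ (n-2) * lam ^ ((m+1) + ((p - (m+1)) + (p - (m+1)))
            + (m+1)) := by
            rw [pow_add, pow_add, pow_add]; ring
        _ ≤ 108 * (n * n) * N p ^ (n-2) * lam ^ (2 * p) := by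
            gcongr
            · omega
        _ = 108 * (n * n) * N p ^ (n-2) * (lam ^ p * lam ^ p) := by
            rw [two_mul, pow_add]
        _ ≤ 108 * (n * n) * N p ^ (n-2) * (N p * N p) := by gcongr <;> exact hNge p
        _ = 108 * (n * n) * N p ^ n := by
            rw [mul_assoc, show N p * N p = N p ^ 2 by ring, ← pow_add]
            congr 2
            omega
    calc Bad.ncard * lam ^ (m+1)
        ≤ (U1.ncard + U2.ncard + U3.ncard) * lam ^ (m+1) := by
          gcongr
          calc Bad.ncard ≤ (U1 ∪ U2).ncard + U3.ncard := Set.ncard_union_le _ _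
            _ ≤ U1.ncard + U2.ncard + U3.ncard :=
                Nat.add_le_add_right (Set.ncard_union_le _ _) _
      _ = U1.ncard * lam ^ (m+1) + U2.ncard * lam ^ (m+1) + U3.ncard * lam ^ (m+1) := by
          ring
      _ ≤ 3 * n * N p ^ n + 108 * (n * n) * N p ^ n + 9 * n * N p ^ n :=
          add_le_add (add_le_add hT1 hT2) hT3
      _ = (12 * n + 108 * (n * n)) * N p ^ n := by ring

end Master

/-- If `H` is a finitely generated free group of rank `k > 1`, then for
any `l ≥ 1` the set of homomorphisms `φ : G → H` with remnant length `l` is generic. -/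
theorem remnant_length_generic {n k : ℕ} (hk : 1 < k) (l : ℕ) (hl : 1 ≤ l) :
    IsGeneric {t : Fin n → FreeGroup (Fin k) |
      HasRemnant (FreeGroup.lift t) ∧
      ∀ i : Fin n, l ≤ remnantLength (FreeGroup.lift t) i} := by
  have hβ : 2 ≤ Fintype.card (Fin k) := by simp; omega
  set lam := Fintype.card (Fin k) * 2 - 1 with hlam
  set N : ℕ → ℕ := fun q => (Bfin (Fin k) q).card with hNdef
  have hNge : ∀ q, lam ^ q ≤ N q := fun q => le_card_Bfin hβ q
  have hlam3 : 3 ≤ lam := by omega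
  have hNpos : ∀ q, 0 < N q := fun q =>
    lt_of_lt_of_le (pow_pos (by omega) q) (hNge q)
  set Cn : ℕ := 12 * n + 108 * (n * n) with hCn
  unfold IsGeneric
  have hcardI : Fintype.card (Fin n) = n := Fintype.card_fin n
  have hden : ∀ p : ℕ, ({x : FreeGroup (Fin k) | FreeGroup.norm x ≤ p}).ncard = N p :=
    fun p => ncard_ball p
  simp only [hden, hcardI]
  set Num : ℕ → ℕ := fun p =>
    ({t : Fin n → FreeGroup (Fin k) |
      t ∈ {t : Fin n → FreeGroup (Fin k) | HasRemnant (FreeGroup.lift t) ∧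
        ∀ i : Fin n, l ≤ remnantLength (FreeGroup.lift t) i} ∧
      ∀ i, (t i).norm ≤ p}).ncard with hNum
  have hNumLe : ∀ p, Num p ≤ N p ^ n := by
    intro p
    rw [← ncard_tball (β := Fin k) p]
    refine Set.ncard_le_ncard ?_ (tball_finite p)
    rintro t ⟨-, ht⟩
    rw [tball_eq]
    exact ht
  have hmaster : ∀ p, 8 * l + 16 ≤ p → ∃ B : ℕ,
      N p ^ n ≤ Num p + B ∧ B * lam ^ (p / 8 + 1) ≤ Cn * N p ^ n := by
    intro p hp
    obtain ⟨B, h1, h2⟩ := master (β := Fin k) (n := n) hβ l p hp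
    exact ⟨B, h1, h2⟩
  -- real-valued bounds
  set f : ℕ → ℝ := fun p => 1 - (Cn : ℝ) * ((lam : ℝ)⁻¹) ^ (p / 8 + 1) with hf
  have hlampos : (0 : ℝ) < (lam : ℝ) := by
    have : (0:ℕ) < lam := by omega
    exact_mod_cast this
  have hlow : ∀ p, 8 * l + 16 ≤ p → f p ≤ (Num p : ℝ) / (N p : ℝ) ^ n := by
    intro p hp
    obtain ⟨B, h1, h2⟩ := hmaster p hp
    have hNR : (0 : ℝ) < (N p : ℝ) ^ n := by
      have : (0:ℕ) < N p ^ n := pow_pos (hNpos p) n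
      exact_mod_cast this
    have hlp : (0 : ℝ) < (lam : ℝ) ^ (p / 8 + 1) := pow_pos hlampos _
    have e1 : (1 : ℝ) - (B : ℝ) / (N p : ℝ) ^ n ≤ (Num p : ℝ) / (N p : ℝ) ^ n := by
      have h1' : ((N p : ℝ) ^ n) ≤ (Num p : ℝ) + (B : ℝ) := by
        have := h1
        exact_mod_cast this
      rw [sub_le_iff_le_add, ← add_div, le_div_iff₀ hNR, one_mul]
      linarith
    have e2 : (B : ℝ) / (N p : ℝ) ^ n ≤ (Cn : ℝ) * ((lam : ℝ)⁻¹) ^ (p / 8 + 1) := by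
      have h2' : (B : ℝ) * (lam : ℝ) ^ (p / 8 + 1) ≤ (Cn : ℝ) * (N p : ℝ) ^ n := by
        exact_mod_cast h2
      rw [div_le_iff₀ hNR, inv_pow, mul_comm ((Cn:ℝ)) (((lam:ℝ) ^ (p/8+1))⁻¹),
        mul_assoc, inv_mul_eq_div, le_div_iff₀ hlp]
      exact h2'
    calc f p = 1 - (Cn : ℝ) * ((lam : ℝ)⁻¹) ^ (p / 8 + 1) := rfl
      _ ≤ 1 - (B : ℝ) / (N p : ℝ) ^ n := by linarith
      _ ≤ (Num p : ℝ) / (N p : ℝ) ^ n := e1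
  have hhigh : ∀ p : ℕ, (Num p : ℝ) / (N p : ℝ) ^ n ≤ 1 := by
    intro p
    have hNR : (0 : ℝ) < (N p : ℝ) ^ n := by
      have : (0:ℕ) < N p ^ n := pow_pos (hNpos p) n
      exact_mod_cast this
    rw [div_le_one hNR]
    exact_mod_cast hNumLe p
  have h8 : Filter.Tendsto (fun p : ℕ => p / 8 + 1) Filter.atTop Filter.atTop := by
    apply Filter.tendsto_atTop_atTop.2
    intro b
    exact ⟨8 * b, fun a ha => by omega⟩
  have hrlt : (lam : ℝ)⁻¹ < 1 := by
    rw [inv_lt_one_iff₀]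
    right
    exact_mod_cast (by omega : (1:ℕ) < lam)
  have hrge : (0:ℝ) ≤ (lam : ℝ)⁻¹ := by positivity
  have hpow0 : Filter.Tendsto (fun p : ℕ => ((lam : ℝ)⁻¹) ^ (p / 8 + 1))
      Filter.atTop (nhds 0) :=
    (tendsto_pow_atTop_nhds_zero_of_lt_one hrge hrlt).comp h8
  have hfto : Filter.Tendsto f Filter.atTop (nhds 1) := by
    have := (hpow0.const_mul (Cn : ℝ)).const_sub 1
    simpa [hf, inv_pow] using this
  refine tendsto_of_tendsto_of_tendsto_of_le_of_le' hfto tendsto_const_nhds ?_ ?_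
  · exact Filter.eventually_atTop.2 ⟨8 * l + 16, fun p hp => hlow p hp⟩
  · exact Filter.Eventually.of_forall hhigh
end
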